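/- arXiv:1909.10205 — 3 statements merged into one kernel-verified Lean document; each statement's English description precedes it below -/
import Mathlib

section
/- Let Q be an even positive integer, μ ≥ 1 an integer, π a permutation of {1,2,…,μ}, and b_1,…,b_μ, b, b' ∈ ℤ_Q. For each integer κ with 0 ≤ κ ≤ 2^μ − 1, write its binary representation κ = Σ_{i=1}^{μ} κ_i 2^{i−1} with κ_i ∈ {0,1}, and define f_κ = (Q/2)·Σ_{k=1}^{μ−1} κ_{π(k)} κ_{π(k+1)} + Σ_{k=1}^{μ} b_k κ_k + b (mod Q). Let ω = exp(2πi/Q). Then the two complex sequences c = (ω^{f_κ})_{κ=0}^{2^μ−1} and d = (ω^{f_κ + (Q/2)κ_{π(1)} + b'})_{κ=0}^{2^μ−1} form a Golay complementary pair of length 2^μ. -/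
namespace DJaux

/-- bit `i` of `κ` -/
def bt (κ i : ℕ) : ℕ := κ / 2 ^ i % 2

/-- flip bit `e` of `κ` -/
def flp (e κ : ℕ) : ℕ := if bt κ e = 0 then κ + 2 ^ e else κ - 2 ^ e

lemma bt_lt (κ i : ℕ) : bt κ i < 2 := Nat.mod_lt _ (by norm_num)

lemma two_pow_le_of_bt (κ e : ℕ) (h : bt κ e ≠ 0) : 2 ^ e ≤ κ := by
  by_contra hc
  have hlt : κ < 2 ^ e := by omega
  exact h (by simp [bt, Nat.div_eq_of_lt hlt])

lemma add_div_pow_succ (κ e : ℕ) (h : bt κ e = 0) :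
    (κ + 2 ^ e) / 2 ^ (e + 1) = κ / 2 ^ (e + 1) := by
  have hmod : κ % 2 ^ (e + 1) = κ % 2 ^ e + 2 ^ e * (κ / 2 ^ e % 2) := Nat.mod_pow_succ
  have hr : κ % 2 ^ (e+1) < 2 ^ e := by
    have h2 := Nat.mod_lt κ (y := 2 ^ e) (show 0 < 2^e by positivity)
    simp only [bt] at h
    rw [h, mul_zero, add_zero] at hmod
    omega
  have h2 : κ % 2 ^ (e+1) + 2 ^ e < 2 ^ (e+1) := by
    have : (2:ℕ) ^ (e+1) = 2 ^ e + 2 ^ e := by ring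
    omega
  conv_lhs => rw [← Nat.div_add_mod κ (2 ^ (e+1))]
  rw [show 2 ^ (e+1) * (κ / 2 ^ (e+1)) + κ % 2 ^ (e+1) + 2 ^ e
      = (κ % 2 ^ (e+1) + 2 ^ e) + (κ / 2 ^ (e+1)) * 2 ^ (e+1) by ring]
  rw [Nat.add_mul_div_right _ _ (by positivity), Nat.div_eq_of_lt h2, zero_add]

lemma div_pow_eq_of_ge (κ e j : ℕ) (h : bt κ e = 0) (hj : e < j) :
    (κ + 2 ^ e) / 2 ^ j = κ / 2 ^ j := by
  have h2 : (2:ℕ) ^ j = 2 ^ (e+1) * 2 ^ (j - e - 1) := by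
    rw [← pow_add]; congr 1; omega
  rw [h2, ← Nat.div_div_eq_div_mul, ← Nat.div_div_eq_div_mul, add_div_pow_succ κ e h]

lemma bt_add_pow (κ e : ℕ) (h : bt κ e = 0) (j : ℕ) :
    bt (κ + 2 ^ e) j = if j = e then 1 else bt κ j := by
  by_cases hje : j = e
  · subst hje
    rw [if_pos rfl]
    simp only [bt] at h ⊢
    rw [Nat.add_div_right _ (by positivity)]
    generalize κ / 2 ^ j = x at h ⊢
    omega
  · rw [if_neg hje]
    rcases lt_or_gt_of_ne hje with hj | hj
    · have h2 : (2:ℕ) ^ e = 2 ^ (e - j - 1) * 2 * 2 ^ j := by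
        rw [mul_assoc, ← pow_succ', ← pow_add]
        congr 1; omega
      simp only [bt]
      rw [h2, Nat.add_mul_div_right _ _ (by positivity)]
      generalize κ / 2 ^ j = x
      generalize (2:ℕ) ^ (e - j - 1) = t
      omega
    · simp only [bt]
      rw [div_pow_eq_of_ge κ e j h hj]

lemma bt_flp (e κ j : ℕ) : bt (flp e κ) j = if j = e then 1 - bt κ e else bt κ j := by
  unfold flp
  by_cases h : bt κ e = 0
  · rw [if_pos h, bt_add_pow κ e h, h]
  · rw [if_neg h]
    have hle := two_pow_le_of_bt κ e h
    have h1 : bt κ e = 1 := by have := bt_lt κ e; omega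
    have h0 : bt (κ - 2 ^ e) e = 0 := by
      simp only [bt] at h1 ⊢
      have hqr := Nat.div_add_mod κ (2 ^ e)
      have hrlt := Nat.mod_lt κ (y := 2 ^ e) (show 0 < 2^e by positivity)
      have hms : 2 ^ e * (κ / 2 ^ e - 1) = 2 ^ e * (κ / 2 ^ e) - 2 ^ e := by
        rw [Nat.mul_sub, mul_one]
      have hq1 : 1 ≤ κ / 2 ^ e := Nat.pos_of_ne_zero fun hz => by simp [hz] at h1
      have hB : 2 ^ e ≤ 2 ^ e * (κ / 2 ^ e) := Nat.le_mul_of_pos_right _ hq1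
      have key : κ - 2 ^ e = 2 ^ e * (κ / 2 ^ e - 1) + κ % 2 ^ e := by
        rw [hms]; omega
      rw [key, Nat.mul_add_div (by positivity), Nat.div_eq_of_lt hrlt, add_zero]
      generalize κ / 2 ^ e = q at h1 ⊢
      omega
    have hκ : κ - 2 ^ e + 2 ^ e = κ := by omega
    have key := bt_add_pow (κ - 2 ^ e) e h0 j
    rw [hκ] at key
    by_cases hj : j = e
    · subst hj
      rw [if_pos rfl, h1]
      rw [if_pos rfl] at key
      omega
    · rw [if_neg hj] at key ⊢
      exact key.symm

lemma flp_lt (μ e κ : ℕ) (he : e < μ) (hκ : κ < 2 ^ μ) : flp e κ < 2 ^ μ := by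
  unfold flp
  by_cases h : bt κ e = 0
  · rw [if_pos h, ← Nat.div_eq_zero_iff_lt (show 0 < 2^μ by positivity),
      div_pow_eq_of_ge κ e μ h he, Nat.div_eq_zero_iff_lt (by positivity)]
    exact hκ
  · rw [if_neg h]
    exact lt_of_le_of_lt (Nat.sub_le _ _) hκ

lemma flp_flp (e κ : ℕ) : flp e (flp e κ) = κ := by
  by_cases h : bt κ e = 0
  · have hx : flp e κ = κ + 2 ^ e := if_pos h
    have hb : bt (κ + 2 ^ e) e = 1 := by rw [bt_add_pow κ e h, if_pos rfl]
    rw [hx]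
    unfold flp
    rw [if_neg (by omega)]
    omega
  · have hle := two_pow_le_of_bt κ e h
    have hx : flp e κ = κ - 2 ^ e := if_neg h
    have hb : bt (κ - 2 ^ e) e = 0 := by
      have := bt_flp e κ e
      rw [if_pos rfl, hx] at this
      have := bt_lt κ e
      omega
    rw [hx]
    unfold flp
    rw [if_pos hb]
    omega

lemma flp_ne (e κ : ℕ) : flp e κ ≠ κ := by
  intro h
  have h1 := bt_flp e κ e
  rw [if_pos rfl, h] at h1
  have := bt_lt κ e
  omega

lemma flp_add (e κ τ : ℕ) (h : bt κ e = bt (κ + τ) e) :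
    flp e (κ + τ) = flp e κ + τ := by
  unfold flp
  rw [← h]
  by_cases h0 : bt κ e = 0
  · rw [if_pos h0, if_pos h0]; ring
  · rw [if_neg h0, if_neg h0]
    have := two_pow_le_of_bt κ e h0
    omega

lemma exists_bt_ne (μ m m' : ℕ) (hm : m < 2 ^ μ) (hm' : m' < 2 ^ μ) (hne : m ≠ m') :
    ∃ i, i < μ ∧ bt m i ≠ bt m' i := by
  by_contra hc
  push_neg at hc
  apply hne
  apply Nat.eq_of_testBit_eq
  intro i
  rcases lt_or_ge i μ with hi | hi
  · have heq := hc i hi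
    simp only [Nat.testBit_eq_decide_div_mod_eq]
    simp only [bt] at heq
    rw [heq]
  · rw [Nat.testBit_eq_false_of_lt (lt_of_lt_of_le hm (Nat.pow_le_pow_right (by norm_num) hi)),
      Nat.testBit_eq_false_of_lt (lt_of_lt_of_le hm' (Nat.pow_le_pow_right (by norm_num) hi))]

lemma find_congr {P Q : ℕ → Prop} [DecidablePred P] [DecidablePred Q]
    (hP : ∃ n, P n) (hQ : ∃ n, Q n) (h : ∀ n, P n ↔ Q n) :
    Nat.find hP = Nat.find hQ :=
  le_antisymm (Nat.find_le ((h _).mpr (Nat.find_spec hQ)))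
    (Nat.find_le ((h _).mp (Nat.find_spec hP)))

end DJaux


/-- Aperiodic autocorrelation of a length-`M` complex sequence `c`. -/
noncomputable def acf (M : ℕ) (c : ℕ → ℂ) (τ : ℕ) : ℂ :=
  ∑ m ∈ Finset.range (M - τ), c m * (starRingEnd ℂ) (c (m + τ))

/-- `(c, d)` is a Golay complementary pair of length `M`. -/
def IsGCP (M : ℕ) (c d : ℕ → ℂ) : Prop :=
  ∀ τ : ℕ, 1 ≤ τ → τ ≤ M - 1 → acf M c τ + acf M d τ = 0

/-- Davis–Jedwab construction: for even `Q`, a permutation `π` of `{0,…,μ-1}`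
(0-based relabelling of `{1,…,μ}`), and `b₁,…,b_μ, b, b' ∈ ℤ_Q`, the quadratic
generalized Boolean function
`f(κ) = (Q/2)·Σ_{k} κ_{π(k)} κ_{π(k+1)} + Σ_k b_k κ_k + b (mod Q)`
(with `κ = Σ_i κ_i 2^i` the binary representation of `κ`) yields the Golay
complementary pair `(ω^{f_κ})_κ` and `(ω^{f_κ + (Q/2)κ_{π(1)} + b'})_κ` of
length `2^μ`, where `ω = exp(2πi/Q)`. -/
theorem davis_jedwab_GCP (Q μ : ℕ) (hQpos : 0 < Q) (hQeven : Even Q) (hμ : 1 ≤ μ)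
    (π : Equiv.Perm (Fin μ)) (b : Fin μ → ZMod Q) (b₀ b' : ZMod Q) :
    -- `bit κ i` is the coefficient `κ_i` in the binary representation `κ = Σ_i κ_i 2^i`
    ∀ bit : ℕ → ℕ → ℕ, (bit = fun κ i => κ / 2 ^ i % 2) →
    -- `p` is the permutation `π` viewed as a function on `{0,…,μ-1} ⊆ ℕ`
    ∀ p : ℕ → ℕ, (p = fun k => if h : k < μ then (π ⟨k, h⟩ : ℕ) else 0) →
    ∀ ω : ℂ, (ω = Complex.exp (2 * Real.pi * Complex.I / Q)) →
    ∀ f : ℕ → ZMod Q,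
      (f = fun κ =>
        (((Q / 2) * ∑ k ∈ Finset.range (μ - 1),
            bit κ (p k) * bit κ (p (k + 1)) : ℕ) : ZMod Q)
        + ∑ k : Fin μ, b k * ((bit κ (k : ℕ) : ℕ) : ZMod Q) + b₀) →
    IsGCP (2 ^ μ)
      (fun κ => ω ^ (f κ).val)
      (fun κ => ω ^ (f κ + (((Q / 2) * bit κ (p 0) : ℕ) : ZMod Q) + b').val) := by
  intro bit hbit p hp ω hω f hf
  have hbit' : ∀ κ i, bit κ i = DJaux.bt κ i := by rw [hbit]; intro κ i; rfl
  -- basic numeric facts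
  have hM1 : 1 ≤ 2 ^ μ := Nat.one_le_two_pow
  have h2H : 2 * (Q / 2) = Q := Nat.mul_div_cancel' hQeven.two_dvd
  haveI : NeZero Q := ⟨by omega⟩
  -- permutation facts
  have hplt : ∀ k, k < μ → p k < μ := by
    intro k hk; rw [hp]; simpa [hk] using (π ⟨k, hk⟩).isLt
  have hpinj : ∀ k k', k < μ → k' < μ → p k = p k' → k = k' := by
    intro k k' hk hk' h
    rw [hp] at h
    simp only [hk, hk', dif_pos] at h
    have := π.injective (Fin.val_injective h)
    simpa using congrArg Fin.val this
  -- ω facts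
  have hωne : ω ≠ 0 := by rw [hω]; exact Complex.exp_ne_zero _
  have hQC : (Q : ℂ) ≠ 0 := Nat.cast_ne_zero.mpr (by omega)
  have hωQ : ω ^ Q = 1 := by
    have h1 : (Q : ℂ) * (2 * Real.pi * Complex.I / Q) = 2 * Real.pi * Complex.I := by
      field_simp
    rw [hω, ← Complex.exp_nat_mul, h1, Complex.exp_two_pi_mul_I]
  have hωH : ω ^ (Q / 2) = -1 := by
    have h1 : ((Q / 2 : ℕ) : ℂ) * (2 * Real.pi * Complex.I / Q) = Real.pi * Complex.I := by
      have h2 : ((Q / 2 : ℕ) : ℂ) * 2 = Q := by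
        have h2' : (Q / 2) * 2 = Q := by omega
        exact_mod_cast congrArg (Nat.cast (R := ℂ)) h2' 
      field_simp
      linear_combination h2
    rw [hω, ← Complex.exp_nat_mul, h1, Complex.exp_pi_mul_I]
  have hωHz : ω ^ ((Q / 2 : ℕ) : ℤ) = -1 := by rw [zpow_natCast]; exact hωH
  have hEcast : ∀ x y : ℤ, ((x : ZMod Q) = (y : ZMod Q)) → ω ^ x = ω ^ y := by
    intro x y hxy
    have hdvd : (Q : ℤ) ∣ x - y := by
      rwa [← ZMod.intCast_zmod_eq_zero_iff_dvd, Int.cast_sub, sub_eq_zero]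
    obtain ⟨k, hk⟩ := hdvd
    have hx : x = y + Q * k := by omega
    rw [hx, zpow_add₀ hωne, zpow_mul, zpow_natCast, hωQ, one_zpow, mul_one]
  have hconj : ∀ n : ℤ, (starRingEnd ℂ) (ω ^ n) = ω ^ (-n) := by
    intro n
    have hcw : (starRingEnd ℂ) ω = ω⁻¹ := by
      rw [hω, ← Complex.exp_conj, ← Complex.exp_neg]
      congr 1
      simp only [map_div₀, map_mul, Complex.conj_I, map_ofNat, Complex.conj_ofReal,
        map_natCast]
      ring
    rw [map_zpow₀, hcw, inv_zpow, ← zpow_neg]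
  have hvalcast : ∀ x : ZMod Q, (((x.val : ℤ) : ZMod Q)) = x := by
    intro x
    push_cast
    rw [ZMod.natCast_val, ZMod.cast_id]
  classical
  simp only [hbit'] at hf
  have hb01 : ∀ κ e, DJaux.bt κ e = 0 ∨ DJaux.bt κ e = 1 := by
    intro κ e; have := DJaux.bt_lt κ e; omega
  have quadZ : ∀ e κ, e < μ →
      (∑ k ∈ Finset.range (μ - 1),
        (DJaux.bt (DJaux.flp e κ) (p k) : ℤ) * (DJaux.bt (DJaux.flp e κ) (p (k+1)) : ℤ))
      = (∑ k ∈ Finset.range (μ - 1), (DJaux.bt κ (p k) : ℤ) * (DJaux.bt κ (p (k+1)) : ℤ))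
        + (1 - 2 * (DJaux.bt κ e : ℤ)) *
          (∑ k ∈ Finset.range (μ - 1),
            ((if p k = e then (DJaux.bt κ (p (k+1)) : ℤ) else 0)
             + (if p (k+1) = e then (DJaux.bt κ (p k) : ℤ) else 0))) := by
    intro e κ he
    rw [Finset.mul_sum, ← Finset.sum_add_distrib]
    apply Finset.sum_congr rfl
    intro k hk
    rw [Finset.mem_range] at hk
    have hk1 : k < μ := by omega
    have hk2 : k + 1 < μ := by omega
    have hbe1 : DJaux.bt κ e ≤ 1 := by have := DJaux.bt_lt κ e; omega
    have hpkk : p k ≠ p (k+1) := fun h => by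
      have := hpinj k (k+1) hk1 hk2 h; omega
    rw [DJaux.bt_flp, DJaux.bt_flp]
    by_cases hc1 : p k = e
    · have hc2 : p (k+1) ≠ e := fun h => hpkk (hc1.trans h.symm)
      rw [if_pos hc1, if_neg hc2, if_pos hc1, if_neg hc2,
        Nat.cast_sub hbe1, Nat.cast_one, hc1]
      ring
    · by_cases hc2 : p (k+1) = e
      · rw [if_neg hc1, if_pos hc2, if_neg hc1, if_pos hc2,
          Nat.cast_sub hbe1, Nat.cast_one, hc2]
        ring
      · rw [if_neg hc1, if_neg hc2, if_neg hc1, if_neg hc2]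
        ring
  have linZ : ∀ e κ (he : e < μ),
      (∑ k : Fin μ, b k * ((DJaux.bt (DJaux.flp e κ) (k : ℕ) : ℕ) : ZMod Q))
      = (∑ k : Fin μ, b k * ((DJaux.bt κ (k : ℕ) : ℕ) : ZMod Q))
        + b ⟨e, he⟩ * (((1 - 2 * (DJaux.bt κ e : ℤ)) : ℤ) : ZMod Q) := by
    intro e κ he
    have hstep : ∀ k : Fin μ,
        b k * ((DJaux.bt (DJaux.flp e κ) (k : ℕ) : ℕ) : ZMod Q)
        = b k * ((DJaux.bt κ (k : ℕ) : ℕ) : ZMod Q)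
          + (if k = (⟨e, he⟩ : Fin μ) then
              b k * (((1 - 2 * (DJaux.bt κ e : ℤ)) : ℤ) : ZMod Q) else 0) := by
      intro k
      by_cases hke : (k : ℕ) = e
      · have hk' : k = ⟨e, he⟩ := Fin.ext hke
        rw [if_pos hk', DJaux.bt_flp, if_pos hke, hke]
        rcases hb01 κ e with h0 | h0 <;> rw [h0] <;> push_cast <;> ring
      · have hk' : k ≠ ⟨e, he⟩ := fun h => hke (by rw [h])
        rw [if_neg hk', DJaux.bt_flp, if_neg hke, add_zero]
    rw [Finset.sum_congr rfl (fun k _ => hstep k), Finset.sum_add_distrib,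
      Finset.sum_ite_eq' Finset.univ, if_pos (Finset.mem_univ _)]
  have hfdiff : ∀ e κ (he : e < μ),
      f (DJaux.flp e κ) = f κ
        + ((Q / 2 : ℕ) : ZMod Q) *
            (((1 - 2 * (DJaux.bt κ e : ℤ)) *
              (∑ k ∈ Finset.range (μ - 1),
                ((if p k = e then (DJaux.bt κ (p (k+1)) : ℤ) else 0)
                 + (if p (k+1) = e then (DJaux.bt κ (p k) : ℤ) else 0))) : ℤ) : ZMod Q)
        + b ⟨e, he⟩ * (((1 - 2 * (DJaux.bt κ e : ℤ)) : ℤ) : ZMod Q) := by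
    intro e κ he
    simp only [hf]
    have hqcast : ∀ κ' : ℕ, ((Q / 2 * ∑ k ∈ Finset.range (μ - 1),
        DJaux.bt κ' (p k) * DJaux.bt κ' (p (k+1)) : ℕ) : ZMod Q)
        = ((Q / 2 : ℕ) : ZMod Q) * (((∑ k ∈ Finset.range (μ - 1),
            (DJaux.bt κ' (p k) : ℤ) * (DJaux.bt κ' (p (k+1)) : ℤ)) : ℤ) : ZMod Q) := by
      intro κ'
      push_cast
      ring
    rw [hqcast, hqcast, quadZ e κ he, linZ e κ he]
    push_cast
    ring
  have hvalcast' : ∀ x : ZMod Q, (((x.val : ℕ) : ZMod Q)) = x := by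
    intro x; rw [ZMod.natCast_val, ZMod.cast_id]
  -- now the GCP property
  intro τ hτ1 hτ2
  have hMτ : τ < 2 ^ μ := by omega
  simp only [acf, hbit']
  rw [← Finset.sum_add_distrib]
  have key1 : ∀ x y : ZMod Q, ω ^ x.val * (starRingEnd ℂ) (ω ^ y.val)
      = ω ^ ((x.val : ℤ) - (y.val : ℤ)) := by
    intro x y
    rw [← zpow_natCast ω x.val, ← zpow_natCast ω y.val, hconj, ← zpow_add₀ hωne,
      sub_eq_add_neg]
  have hsummand : ∀ m : ℕ,
      ω ^ (f m).val * (starRingEnd ℂ) (ω ^ (f (m + τ)).val)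
      + ω ^ (f m + ((Q / 2 * DJaux.bt m (p 0) : ℕ) : ZMod Q) + b').val *
          (starRingEnd ℂ)
          (ω ^ (f (m + τ) + ((Q / 2 * DJaux.bt (m + τ) (p 0) : ℕ) : ZMod Q) + b').val)
      = if DJaux.bt m (p 0) = DJaux.bt (m + τ) (p 0) then
          ω ^ (((f m).val : ℤ) - ((f (m + τ)).val : ℤ)) * 2 else 0 := by
    intro m
    rw [key1, key1]
    have key2 : ω ^ (((f m + ((Q / 2 * DJaux.bt m (p 0) : ℕ) : ZMod Q) + b').val : ℤ)
        - ((f (m + τ) + ((Q / 2 * DJaux.bt (m + τ) (p 0) : ℕ) : ZMod Q) + b').val : ℤ))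
        = ω ^ (((f m).val : ℤ) - ((f (m + τ)).val : ℤ)) *
          ω ^ (((Q / 2 : ℕ) : ℤ) * (DJaux.bt m (p 0) : ℤ)
            - ((Q / 2 : ℕ) : ℤ) * (DJaux.bt (m + τ) (p 0) : ℤ)) := by
      rw [← zpow_add₀ hωne]
      apply hEcast
      generalize (Q / 2 : ℕ) = Hn
      push_cast [hvalcast']
      ring
    rw [key2]
    by_cases hP : DJaux.bt m (p 0) = DJaux.bt (m + τ) (p 0)
    · rw [if_pos hP, hP, sub_self, zpow_zero]
      ring
    · rw [if_neg hP]
      rcases hb01 m (p 0) with h1 | h1 <;> rcases hb01 (m + τ) (p 0) with h2 | h2 <;>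
        rw [h1, h2] at hP ⊢ <;> try exact absurd rfl hP
      · -- bits 0, 1 : exponent = -(Q/2)
        rw [show ((Q / 2 : ℕ) : ℤ) * ((0 : ℕ) : ℤ) - ((Q / 2 : ℕ) : ℤ) * ((1 : ℕ) : ℤ)
            = -((Q / 2 : ℕ) : ℤ) by push_cast; ring, zpow_neg, hωHz]
        ring
      · -- bits 1, 0 : exponent = Q/2
        rw [show ((Q / 2 : ℕ) : ℤ) * ((1 : ℕ) : ℤ) - ((Q / 2 : ℕ) : ℤ) * ((0 : ℕ) : ℤ)
            = ((Q / 2 : ℕ) : ℤ) by push_cast; ring, hωHz]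
        ring
  rw [Finset.sum_congr rfl (fun m _ => hsummand m), ← Finset.sum_filter]
  -- the filtered set
  set s : Finset ℕ := Finset.filter
    (fun m => DJaux.bt m (p 0) = DJaux.bt (m + τ) (p 0)) (Finset.range (2 ^ μ - τ))
    with hsdef
  have hex : ∀ a ∈ s, ∃ j, j < μ ∧ DJaux.bt a (p j) ≠ DJaux.bt (a + τ) (p j) := by
    intro a ha
    rw [hsdef, Finset.mem_filter, Finset.mem_range] at ha
    have ha2 : a + τ < 2 ^ μ := by omega
    obtain ⟨i, hiμ, hine⟩ := DJaux.exists_bt_ne μ a (a + τ) (by omega) ha2 (by omega)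
    refine ⟨(π.symm ⟨i, hiμ⟩ : ℕ), (π.symm ⟨i, hiμ⟩).isLt, ?_⟩
    have hpj : p ((π.symm ⟨i, hiμ⟩ : ℕ)) = i := by
      rw [hp]
      simp only [Fin.is_lt, dif_pos, Fin.eta, Equiv.apply_symm_apply]
    rw [hpj]
    exact hine
  have hfacts : ∀ a (ha : a ∈ s),
      1 ≤ Nat.find (hex a ha) ∧ Nat.find (hex a ha) < μ ∧
      DJaux.bt a (p (Nat.find (hex a ha))) ≠ DJaux.bt (a + τ) (p (Nat.find (hex a ha))) ∧
      ∀ j', j' < Nat.find (hex a ha) →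
        DJaux.bt a (p j') = DJaux.bt (a + τ) (p j') := by
    intro a ha
    obtain ⟨hjμ, hjne⟩ := Nat.find_spec (hex a ha)
    have hmin : ∀ j', j' < Nat.find (hex a ha) →
        DJaux.bt a (p j') = DJaux.bt (a + τ) (p j') := by
      intro j' hj'
      have h1 := Nat.find_min (hex a ha) hj'
      by_contra hc
      exact h1 ⟨by omega, hc⟩
    refine ⟨?_, hjμ, hjne, hmin⟩
    rcases Nat.eq_zero_or_pos (Nat.find (hex a ha)) with h0 | h1
    · exfalso
      have ha' := ha
      rw [hsdef, Finset.mem_filter] at ha'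
      rw [h0] at hjne
      exact hjne ha'.2
    · exact h1
  have hmem : ∀ a (ha : a ∈ s), DJaux.flp (p (Nat.find (hex a ha) - 1)) a ∈ s := by
    intro a ha
    obtain ⟨hj1, hjμ, hjne, hmin⟩ := hfacts a ha
    have he : p (Nat.find (hex a ha) - 1) < μ := hplt _ (by omega)
    have hbe : DJaux.bt a (p (Nat.find (hex a ha) - 1))
        = DJaux.bt (a + τ) (p (Nat.find (hex a ha) - 1)) := hmin _ (by omega)
    have hadd := DJaux.flp_add (p (Nat.find (hex a ha) - 1)) a τ hbe
    have ha' := ha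
    rw [hsdef, Finset.mem_filter, Finset.mem_range] at ha'
    rw [hsdef, Finset.mem_filter, Finset.mem_range]
    constructor
    · have hlt : DJaux.flp (p (Nat.find (hex a ha) - 1)) (a + τ) < 2 ^ μ :=
        DJaux.flp_lt μ _ _ he (by omega)
      rw [hadd] at hlt
      omega
    · rw [← hadd, DJaux.bt_flp, DJaux.bt_flp]
      by_cases hc : p 0 = p (Nat.find (hex a ha) - 1)
      · rw [if_pos hc, if_pos hc, hbe]
      · rw [if_neg hc, if_neg hc]
        exact ha'.2
  have hfindeq : ∀ a (ha : a ∈ s),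
      Nat.find (hex (DJaux.flp (p (Nat.find (hex a ha) - 1)) a) (hmem a ha))
      = Nat.find (hex a ha) := by
    intro a ha
    obtain ⟨hj1, hjμ, hjne, hmin⟩ := hfacts a ha
    have hbe : DJaux.bt a (p (Nat.find (hex a ha) - 1))
        = DJaux.bt (a + τ) (p (Nat.find (hex a ha) - 1)) := hmin _ (by omega)
    have hadd := DJaux.flp_add (p (Nat.find (hex a ha) - 1)) a τ hbe
    apply DJaux.find_congr
    intro n
    rw [← hadd, DJaux.bt_flp, DJaux.bt_flp]
    by_cases hc : p n = p (Nat.find (hex a ha) - 1)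
    · rw [if_pos hc, if_pos hc, hc]
      simp [hbe]
    · rw [if_neg hc, if_neg hc]
  have hTflip : ∀ a (ha : a ∈ s),
      ω ^ (((f (DJaux.flp (p (Nat.find (hex a ha) - 1)) a)).val : ℤ)
        - ((f (DJaux.flp (p (Nat.find (hex a ha) - 1)) a + τ)).val : ℤ))
      = - ω ^ (((f a).val : ℤ) - ((f (a + τ)).val : ℤ)) := by
    intro a ha
    obtain ⟨hj1, hjμ, hjne, hmin⟩ := hfacts a ha
    set j := Nat.find (hex a ha) with hjdef
    set e := p (j - 1) with hedef
    have he : e < μ := hplt _ (by omega)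
    have hbe : DJaux.bt a e = DJaux.bt (a + τ) e := hmin _ (by omega)
    have hadd := DJaux.flp_add e a τ hbe
    have hRdiff : (∑ k ∈ Finset.range (μ - 1),
        ((if p k = e then (DJaux.bt a (p (k + 1)) : ℤ) else 0)
         + (if p (k + 1) = e then (DJaux.bt a (p k) : ℤ) else 0)))
        - (∑ k ∈ Finset.range (μ - 1),
        ((if p k = e then (DJaux.bt (a + τ) (p (k + 1)) : ℤ) else 0)
         + (if p (k + 1) = e then (DJaux.bt (a + τ) (p k) : ℤ) else 0)))
        = (DJaux.bt a (p j) : ℤ) - (DJaux.bt (a + τ) (p j) : ℤ) := by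
      rw [← Finset.sum_sub_distrib]
      have hterm : ∀ k ∈ Finset.range (μ - 1),
          ((if p k = e then (DJaux.bt a (p (k + 1)) : ℤ) else 0)
           + (if p (k + 1) = e then (DJaux.bt a (p k) : ℤ) else 0))
          - ((if p k = e then (DJaux.bt (a + τ) (p (k + 1)) : ℤ) else 0)
           + (if p (k + 1) = e then (DJaux.bt (a + τ) (p k) : ℤ) else 0))
          = if k = j - 1 then
              (DJaux.bt a (p j) : ℤ) - (DJaux.bt (a + τ) (p j) : ℤ) else 0 := by
        intro k hk
        rw [Finset.mem_range] at hk
        by_cases hc1 : p k = e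
        · have hkj : k = j - 1 := hpinj k (j - 1) (by omega) (by omega) (hc1.trans hedef)
          have hc2 : p (k + 1) ≠ e := by
            intro hcc
            have := hpinj (k + 1) (j - 1) (by omega) (by omega) (hcc.trans hedef)
            omega
          rw [if_pos hc1, if_pos hc1, if_neg hc2, if_neg hc2, if_pos hkj, hkj,
            show j - 1 + 1 = j by omega]
          ring
        · have hkj : k ≠ j - 1 := fun hcc => hc1 (by rw [hcc, ← hedef])
          rw [if_neg hc1, if_neg hc1, if_neg hkj]
          by_cases hc2 : p (k + 1) = e
          · have hk1j : k + 1 = j - 1 := hpinj (k + 1) (j - 1) (by omega) (by omega)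
              (hc2.trans hedef)
            have hmk := hmin k (by omega)
            rw [if_pos hc2, if_pos hc2, hmk]
            ring
          · rw [if_neg hc2, if_neg hc2]
            ring
      rw [Finset.sum_congr rfl hterm, Finset.sum_ite_eq' (Finset.range (μ - 1)) (j - 1),
        if_pos (Finset.mem_range.mpr (by omega))]
    have hHH : ((Q / 2 : ℕ) : ZMod Q) + ((Q / 2 : ℕ) : ZMod Q) = 0 := by
      rw [← Nat.cast_add, show Q / 2 + Q / 2 = Q by omega, ZMod.natCast_self]
    have hkey : ((Q / 2 : ℕ) : ZMod Q) *
          ((((1 - 2 * (DJaux.bt a e : ℤ)) *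
            (∑ k ∈ Finset.range (μ - 1),
              ((if p k = e then (DJaux.bt a (p (k + 1)) : ℤ) else 0)
               + (if p (k + 1) = e then (DJaux.bt a (p k) : ℤ) else 0)))) : ℤ) : ZMod Q)
        - ((Q / 2 : ℕ) : ZMod Q) *
          ((((1 - 2 * (DJaux.bt a e : ℤ)) *
            (∑ k ∈ Finset.range (μ - 1),
              ((if p k = e then (DJaux.bt (a + τ) (p (k + 1)) : ℤ) else 0)
               + (if p (k + 1) = e then (DJaux.bt (a + τ) (p k) : ℤ) else 0)))) : ℤ) : ZMod Q)
        = ((Q / 2 : ℕ) : ZMod Q) := by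
      rw [← mul_sub, ← Int.cast_sub, ← mul_sub, hRdiff]
      have hβ : (DJaux.bt a e : ℤ) = 0 ∨ (DJaux.bt a e : ℤ) = 1 := by
        rcases hb01 a e with h | h <;> rw [h] <;> simp
      have hε : (DJaux.bt a (p j) : ℤ) - (DJaux.bt (a + τ) (p j) : ℤ) = 1
          ∨ (DJaux.bt a (p j) : ℤ) - (DJaux.bt (a + τ) (p j) : ℤ) = -1 := by
        have h1 := hb01 a (p j)
        have h2 := hb01 (a + τ) (p j)
        omega
      rcases hβ with hβ | hβ <;> rcases hε with hε | hε <;> rw [hβ, hε]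
      · norm_num
      · push_cast
        linear_combination -hHH
      · push_cast
        linear_combination -hHH
      · norm_num
    have hZ2 : f (DJaux.flp e a) - f (DJaux.flp e (a + τ))
        = f a - f (a + τ) + ((Q / 2 : ℕ) : ZMod Q) := by
      rw [hfdiff e a he, hfdiff e (a + τ) he, ← hbe]
      linear_combination hkey
    have hZ : (((((f (DJaux.flp e a)).val : ℤ) - ((f (DJaux.flp e (a + τ))).val : ℤ) : ℤ)) : ZMod Q)
        = (((((f a).val : ℤ) - ((f (a + τ)).val : ℤ) + ((Q / 2 : ℕ) : ℤ) : ℤ)) : ZMod Q) := by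
      simp only [Int.cast_sub, Int.cast_add, Int.cast_natCast, hvalcast]
      exact hZ2
    rw [← hadd, hEcast _ _ hZ, zpow_add₀ hωne, hωHz]
    ring
  refine Finset.sum_involution
    (fun a ha => DJaux.flp (p (Nat.find (hex a ha) - 1)) a) ?_ ?_ hmem ?_
  · intro a ha
    rw [hTflip a ha]
    ring
  · intro a ha _
    exact DJaux.flp_ne _ _
  · intro a ha
    rw [hfindeq a ha]
    exact DJaux.flp_flp _ _
end

section
/- Let K = 4, T > 0, and let g be the Hermite prototype filter g(t) = (1/√T) e^{−2π((t−KT/2)/T)²} Σ_{k ∈ {0,4,8,12,16,20}} β_k H_k(2√π (t−KT/2)/T) for t ∈ [0, KT] and g(t) = 0 otherwise, where H_k denotes the k-th physicists' Hermite polynomial and β_0 = 1.412682577, β_4 = −3.0145×10⁻³, β_8 = −8.8041×10⁻⁶, β_12 = −2.2611×10⁻⁹, β_16 = −4.4570×10⁻¹⁵, β_20 = 1.8633×10⁻¹⁶. Then for every real t, T · g(t)² ≤ ( Σ_{k ∈ {0,4,8,12,16,20}} β_k H_k(0) )², with equality at t = KT/2, and this bound is less than 1.851 (i.e., approximately 2.673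 dB). -/
/-- The `k`-th physicists' Hermite polynomial, via the Rodrigues formula
`H_k(x) = (−1)^k e^{x²} (d/dx)^k e^{−x²}` (so `H₀(0) = 1`, `H₄(0) = 12`,
`H₈(0) = 1680`, `H₁₂(0) = 665280`, …). -/
noncomputable def physHermite (k : ℕ) (x : ℝ) : ℝ :=
  (-1 : ℝ) ^ k * Real.exp (x ^ 2) * (deriv^[k] fun y : ℝ => Real.exp (-y ^ 2)) x

private lemma gaussHD (x : ℝ) : HasDerivAt (fun y : ℝ => Real.exp (-y ^ 2)) (Real.exp (-x ^ 2) * -(((2:ℕ):ℝ) * x ^ (2 - 1))) x :=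
  ((hasDerivAt_pow 2 x).neg).exp

private lemma gaussD0 : deriv^[0] (fun y : ℝ => Real.exp (-y ^ 2)) = fun x : ℝ => (1 * x ^ 0) * Real.exp (-x ^ 2) := by
  funext x; simp

private lemma gaussD1 : deriv^[1] (fun y : ℝ => Real.exp (-y ^ 2)) = fun x : ℝ => ((-2) * x ^ 1) * Real.exp (-x ^ 2) := by
  rw [Function.iterate_succ_apply', gaussD0]
  funext x
  have h : HasDerivAt (fun y : ℝ => (1 * y ^ 0) * Real.exp (-y ^ 2))
      ((((1:ℝ) * (((0:ℕ):ℝ) * x ^ (0 - 1)))) * Real.exp (-x ^ 2) + (1 * x ^ 0) * (Real.exp (-x ^ 2) * -(((2:ℕ):ℝ) * x ^ (2 - 1)))) x :=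
    ((hasDerivAt_pow 0 x).const_mul ((1):ℝ)).mul (gaussHD x)
  rw [h.deriv]; push_cast; ring

private lemma gaussD2 : deriv^[2] (fun y : ℝ => Real.exp (-y ^ 2)) = fun x : ℝ => ((-2) * x ^ 0 + 4 * x ^ 2) * Real.exp (-x ^ 2) := by
  rw [Function.iterate_succ_apply', gaussD1]
  funext x
  have h : HasDerivAt (fun y : ℝ => ((-2) * y ^ 1) * Real.exp (-y ^ 2))
      (((((-2):ℝ) * (((1:ℕ):ℝ) * x ^ (1 - 1)))) * Real.exp (-x ^ 2) + ((-2) * x ^ 1) * (Real.exp (-x ^ 2) * -(((2:ℕ):ℝ) * x ^ (2 - 1)))) x :=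
    ((hasDerivAt_pow 1 x).const_mul (((-2)):ℝ)).mul (gaussHD x)
  rw [h.deriv]; push_cast; ring

private lemma gaussD3 : deriv^[3] (fun y : ℝ => Real.exp (-y ^ 2)) = fun x : ℝ => (12 * x ^ 1 + (-8) * x ^ 3) * Real.exp (-x ^ 2) := by
  rw [Function.iterate_succ_apply', gaussD2]
  funext x
  have h : HasDerivAt (fun y : ℝ => ((-2) * y ^ 0 + 4 * y ^ 2) * Real.exp (-y ^ 2))
      (((((-2):ℝ) * (((0:ℕ):ℝ) * x ^ (0 - 1))) + ((4:ℝ) * (((2:ℕ):ℝ) * x ^ (2 - 1)))) * Real.exp (-x ^ 2) + ((-2) * x ^ 0 + 4 * x ^ 2) * (Real.exp (-x ^ 2) * -(((2:ℕ):ℝ) * x ^ (2 - 1)))) x :=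
    (((hasDerivAt_pow 0 x).const_mul (((-2)):ℝ)).add ((hasDerivAt_pow 2 x).const_mul ((4):ℝ))).mul (gaussHD x)
  rw [h.deriv]; push_cast; ring

private lemma gaussD4 : deriv^[4] (fun y : ℝ => Real.exp (-y ^ 2)) = fun x : ℝ => (12 * x ^ 0 + (-48) * x ^ 2 + 16 * x ^ 4) * Real.exp (-x ^ 2) := by
  rw [Function.iterate_succ_apply', gaussD3]
  funext x
  have h : HasDerivAt (fun y : ℝ => (12 * y ^ 1 + (-8) * y ^ 3) * Real.exp (-y ^ 2))
      ((((12:ℝ) * (((1:ℕ):ℝ) * x ^ (1 - 1))) + (((-8):ℝ) * (((3:ℕ):ℝ) * x ^ (3 - 1)))) * Real.exp (-x ^ 2) + (12 * x ^ 1 + (-8) * x ^ 3) * (Real.exp (-x ^ 2) * -(((2:ℕ):ℝ) * x ^ (2 - 1)))) x :=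
    (((hasDerivAt_pow 1 x).const_mul ((12):ℝ)).add ((hasDerivAt_pow 3 x).const_mul (((-8)):ℝ))).mul (gaussHD x)
  rw [h.deriv]; push_cast; ring

private lemma gaussD5 : deriv^[5] (fun y : ℝ => Real.exp (-y ^ 2)) = fun x : ℝ => ((-120) * x ^ 1 + 160 * x ^ 3 + (-32) * x ^ 5) * Real.exp (-x ^ 2) := by
  rw [Function.iterate_succ_apply', gaussD4]
  funext x
  have h : HasDerivAt (fun y : ℝ => (12 * y ^ 0 + (-48) * y ^ 2 + 16 * y ^ 4) * Real.exp (-y ^ 2))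
      ((((12:ℝ) * (((0:ℕ):ℝ) * x ^ (0 - 1))) + (((-48):ℝ) * (((2:ℕ):ℝ) * x ^ (2 - 1))) + ((16:ℝ) * (((4:ℕ):ℝ) * x ^ (4 - 1)))) * Real.exp (-x ^ 2) + (12 * x ^ 0 + (-48) * x ^ 2 + 16 * x ^ 4) * (Real.exp (-x ^ 2) * -(((2:ℕ):ℝ) * x ^ (2 - 1)))) x :=
    ((((hasDerivAt_pow 0 x).const_mul ((12):ℝ)).add ((hasDerivAt_pow 2 x).const_mul (((-48)):ℝ))).add ((hasDerivAt_pow 4 x).const_mul ((16):ℝ))).mul (gaussHD x)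
  rw [h.deriv]; push_cast; ring

private lemma gaussD6 : deriv^[6] (fun y : ℝ => Real.exp (-y ^ 2)) = fun x : ℝ => ((-120) * x ^ 0 + 720 * x ^ 2 + (-480) * x ^ 4 + 64 * x ^ 6) * Real.exp (-x ^ 2) := by
  rw [Function.iterate_succ_apply', gaussD5]
  funext x
  have h : HasDerivAt (fun y : ℝ => ((-120) * y ^ 1 + 160 * y ^ 3 + (-32) * y ^ 5) * Real.exp (-y ^ 2))
      (((((-120):ℝ) * (((1:ℕ):ℝ) * x ^ (1 - 1))) + ((160:ℝ) * (((3:ℕ):ℝ) * x ^ (3 - 1))) + (((-32):ℝ) * (((5:ℕ):ℝ) * x ^ (5 - 1)))) * Real.exp (-x ^ 2) + ((-120) * x ^ 1 + 160 * x ^ 3 + (-32) * x ^ 5) * (Real.exp (-x ^ 2) * -(((2:ℕ):ℝ) * x ^ (2 - 1)))) x :=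
    ((((hasDerivAt_pow 1 x).const_mul (((-120)):ℝ)).add ((hasDerivAt_pow 3 x).const_mul ((160):ℝ))).add ((hasDerivAt_pow 5 x).const_mul (((-32)):ℝ))).mul (gaussHD x)
  rw [h.deriv]; push_cast; ring

private lemma gaussD7 : deriv^[7] (fun y : ℝ => Real.exp (-y ^ 2)) = fun x : ℝ => (1680 * x ^ 1 + (-3360) * x ^ 3 + 1344 * x ^ 5 + (-128) * x ^ 7) * Real.exp (-x ^ 2) := by
  rw [Function.iterate_succ_apply', gaussD6]
  funext x
  have h : HasDerivAt (fun y : ℝ => ((-120) * y ^ 0 + 720 * y ^ 2 + (-480) * y ^ 4 + 64 * y ^ 6) * Real.exp (-y ^ 2))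
      (((((-120):ℝ) * (((0:ℕ):ℝ) * x ^ (0 - 1))) + ((720:ℝ) * (((2:ℕ):ℝ) * x ^ (2 - 1))) + (((-480):ℝ) * (((4:ℕ):ℝ) * x ^ (4 - 1))) + ((64:ℝ) * (((6:ℕ):ℝ) * x ^ (6 - 1)))) * Real.exp (-x ^ 2) + ((-120) * x ^ 0 + 720 * x ^ 2 + (-480) * x ^ 4 + 64 * x ^ 6) * (Real.exp (-x ^ 2) * -(((2:ℕ):ℝ) * x ^ (2 - 1)))) x :=
    (((((hasDerivAt_pow 0 x).const_mul (((-120)):ℝ)).add ((hasDerivAt_pow 2 x).const_mul ((720):ℝ))).add ((hasDerivAt_pow 4 x).const_mul (((-480)):ℝ))).add ((hasDerivAt_pow 6 x).const_mul ((64):ℝ))).mul (gaussHD x)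
  rw [h.deriv]; push_cast; ring

private lemma gaussD8 : deriv^[8] (fun y : ℝ => Real.exp (-y ^ 2)) = fun x : ℝ => (1680 * x ^ 0 + (-13440) * x ^ 2 + 13440 * x ^ 4 + (-3584) * x ^ 6 + 256 * x ^ 8) * Real.exp (-x ^ 2) := by
  rw [Function.iterate_succ_apply', gaussD7]
  funext x
  have h : HasDerivAt (fun y : ℝ => (1680 * y ^ 1 + (-3360) * y ^ 3 + 1344 * y ^ 5 + (-128) * y ^ 7) * Real.exp (-y ^ 2))
      ((((1680:ℝ) * (((1:ℕ):ℝ) * x ^ (1 - 1))) + (((-3360):ℝ) * (((3:ℕ):ℝ) * x ^ (3 - 1))) + ((1344:ℝ) * (((5:ℕ):ℝ) * x ^ (5 - 1))) + (((-128):ℝ) * (((7:ℕ):ℝ) * x ^ (7 - 1)))) * Real.exp (-x ^ 2) + (1680 * x ^ 1 + (-3360) * x ^ 3 + 1344 * x ^ 5 + (-128) * x ^ 7) * (Real.exp (-x ^ 2) * -(((2:ℕ):ℝ) * x ^ (2 - 1)))) x :=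
    (((((hasDerivAt_pow 1 x).const_mul ((1680):ℝ)).add ((hasDerivAt_pow 3 x).const_mul (((-3360)):ℝ))).add ((hasDerivAt_pow 5 x).const_mul ((1344):ℝ))).add ((hasDerivAt_pow 7 x).const_mul (((-128)):ℝ))).mul (gaussHD x)
  rw [h.deriv]; push_cast; ring

private lemma gaussD9 : deriv^[9] (fun y : ℝ => Real.exp (-y ^ 2)) = fun x : ℝ => ((-30240) * x ^ 1 + 80640 * x ^ 3 + (-48384) * x ^ 5 + 9216 * x ^ 7 + (-512) * x ^ 9) * Real.exp (-x ^ 2) := by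
  rw [Function.iterate_succ_apply', gaussD8]
  funext x
  have h : HasDerivAt (fun y : ℝ => (1680 * y ^ 0 + (-13440) * y ^ 2 + 13440 * y ^ 4 + (-3584) * y ^ 6 + 256 * y ^ 8) * Real.exp (-y ^ 2))
      ((((1680:ℝ) * (((0:ℕ):ℝ) * x ^ (0 - 1))) + (((-13440):ℝ) * (((2:ℕ):ℝ) * x ^ (2 - 1))) + ((13440:ℝ) * (((4:ℕ):ℝ) * x ^ (4 - 1))) + (((-3584):ℝ) * (((6:ℕ):ℝ) * x ^ (6 - 1))) + ((256:ℝ) * (((8:ℕ):ℝ) * x ^ (8 - 1)))) * Real.exp (-x ^ 2) + (1680 * x ^ 0 + (-13440) * x ^ 2 + 13440 * x ^ 4 + (-3584) * x ^ 6 + 256 * x ^ 8) * (Real.exp (-x ^ 2) * -(((2:ℕ):ℝ) * x ^ (2 - 1)))) x :=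
    ((((((hasDerivAt_pow 0 x).const_mul ((1680):ℝ)).add ((hasDerivAt_pow 2 x).const_mul (((-13440)):ℝ))).add ((hasDerivAt_pow 4 x).const_mul ((13440):ℝ))).add ((hasDerivAt_pow 6 x).const_mul (((-3584)):ℝ))).add ((hasDerivAt_pow 8 x).const_mul ((256):ℝ))).mul (gaussHD x)
  rw [h.deriv]; push_cast; ring

private lemma gaussD10 : deriv^[10] (fun y : ℝ => Real.exp (-y ^ 2)) = fun x : ℝ => ((-30240) * x ^ 0 + 302400 * x ^ 2 + (-403200) * x ^ 4 + 161280 * x ^ 6 + (-23040) * x ^ 8 + 1024 * x ^ 10) * Real.exp (-x ^ 2) := by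
  rw [Function.iterate_succ_apply', gaussD9]
  funext x
  have h : HasDerivAt (fun y : ℝ => ((-30240) * y ^ 1 + 80640 * y ^ 3 + (-48384) * y ^ 5 + 9216 * y ^ 7 + (-512) * y ^ 9) * Real.exp (-y ^ 2))
      (((((-30240):ℝ) * (((1:ℕ):ℝ) * x ^ (1 - 1))) + ((80640:ℝ) * (((3:ℕ):ℝ) * x ^ (3 - 1))) + (((-48384):ℝ) * (((5:ℕ):ℝ) * x ^ (5 - 1))) + ((9216:ℝ) * (((7:ℕ):ℝ) * x ^ (7 - 1))) + (((-512):ℝ) * (((9:ℕ):ℝ) * x ^ (9 - 1)))) * Real.exp (-x ^ 2) + ((-30240) * x ^ 1 + 80640 * x ^ 3 + (-48384) * x ^ 5 + 9216 * x ^ 7 + (-512) * x ^ 9) * (Real.exp (-x ^ 2) * -(((2:ℕ):ℝ) * x ^ (2 - 1)))) x :=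
    ((((((hasDerivAt_pow 1 x).const_mul (((-30240)):ℝ)).add ((hasDerivAt_pow 3 x).const_mul ((80640):ℝ))).add ((hasDerivAt_pow 5 x).const_mul (((-48384)):ℝ))).add ((hasDerivAt_pow 7 x).const_mul ((9216):ℝ))).add ((hasDerivAt_pow 9 x).const_mul (((-512)):ℝ))).mul (gaussHD x)
  rw [h.deriv]; push_cast; ring

private lemma gaussD11 : deriv^[11] (fun y : ℝ => Real.exp (-y ^ 2)) = fun x : ℝ => (665280 * x ^ 1 + (-2217600) * x ^ 3 + 1774080 * x ^ 5 + (-506880) * x ^ 7 + 56320 * x ^ 9 + (-2048) * x ^ 11) * Real.exp (-x ^ 2) := by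
  rw [Function.iterate_succ_apply', gaussD10]
  funext x
  have h : HasDerivAt (fun y : ℝ => ((-30240) * y ^ 0 + 302400 * y ^ 2 + (-403200) * y ^ 4 + 161280 * y ^ 6 + (-23040) * y ^ 8 + 1024 * y ^ 10) * Real.exp (-y ^ 2))
      (((((-30240):ℝ) * (((0:ℕ):ℝ) * x ^ (0 - 1))) + ((302400:ℝ) * (((2:ℕ):ℝ) * x ^ (2 - 1))) + (((-403200):ℝ) * (((4:ℕ):ℝ) * x ^ (4 - 1))) + ((161280:ℝ) * (((6:ℕ):ℝ) * x ^ (6 - 1))) + (((-23040):ℝ) * (((8:ℕ):ℝ) * x ^ (8 - 1))) + ((1024:ℝ) * (((10:ℕ):ℝ) * x ^ (10 - 1)))) * Real.exp (-x ^ 2) + ((-30240) * x ^ 0 + 302400 * x ^ 2 + (-403200) * x ^ 4 + 161280 * x ^ 6 + (-23040) * x ^ 8 + 1024 * x ^ 10) * (Real.exp (-x ^ 2) * -(((2:ℕ):ℝ) * x ^ (2 - 1)))) x :=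
    (((((((hasDerivAt_pow 0 x).const_mul (((-30240)):ℝ)).add ((hasDerivAt_pow 2 x).const_mul ((302400):ℝ))).add ((hasDerivAt_pow 4 x).const_mul (((-403200)):ℝ))).add ((hasDerivAt_pow 6 x).const_mul ((161280):ℝ))).add ((hasDerivAt_pow 8 x).const_mul (((-23040)):ℝ))).add ((hasDerivAt_pow 10 x).const_mul ((1024):ℝ))).mul (gaussHD x)
  rw [h.deriv]; push_cast; ring

private lemma gaussD12 : deriv^[12] (fun y : ℝ => Real.exp (-y ^ 2)) = fun x : ℝ => (665280 * x ^ 0 + (-7983360) * x ^ 2 + 13305600 * x ^ 4 + (-7096320) * x ^ 6 + 1520640 * x ^ 8 + (-135168) * x ^ 10 + 4096 * x ^ 12) * Real.exp (-x ^ 2) := by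
  rw [Function.iterate_succ_apply', gaussD11]
  funext x
  have h : HasDerivAt (fun y : ℝ => (665280 * y ^ 1 + (-2217600) * y ^ 3 + 1774080 * y ^ 5 + (-506880) * y ^ 7 + 56320 * y ^ 9 + (-2048) * y ^ 11) * Real.exp (-y ^ 2))
      ((((665280:ℝ) * (((1:ℕ):ℝ) * x ^ (1 - 1))) + (((-2217600):ℝ) * (((3:ℕ):ℝ) * x ^ (3 - 1))) + ((1774080:ℝ) * (((5:ℕ):ℝ) * x ^ (5 - 1))) + (((-506880):ℝ) * (((7:ℕ):ℝ) * x ^ (7 - 1))) + ((56320:ℝ) * (((9:ℕ):ℝ) * x ^ (9 - 1))) + (((-2048):ℝ) * (((11:ℕ):ℝ) * x ^ (11 - 1)))) * Real.exp (-x ^ 2) + (665280 * x ^ 1 + (-2217600) * x ^ 3 + 1774080 * x ^ 5 + (-506880) * x ^ 7 + 56320 * x ^ 9 + (-2048) * x ^ 11) * (Real.exp (-x ^ 2) * -(((2:ℕ):ℝ) * x ^ (2 - 1)))) x :=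
    (((((((hasDerivAt_pow 1 x).const_mul ((665280):ℝ)).add ((hasDerivAt_pow 3 x).const_mul (((-2217600)):ℝ))).add ((hasDerivAt_pow 5 x).const_mul ((1774080):ℝ))).add ((hasDerivAt_pow 7 x).const_mul (((-506880)):ℝ))).add ((hasDerivAt_pow 9 x).const_mul ((56320):ℝ))).add ((hasDerivAt_pow 11 x).const_mul (((-2048)):ℝ))).mul (gaussHD x)
  rw [h.deriv]; push_cast; ring

private lemma gaussD13 : deriv^[13] (fun y : ℝ => Real.exp (-y ^ 2)) = fun x : ℝ => ((-17297280) * x ^ 1 + 69189120 * x ^ 3 + (-69189120) * x ^ 5 + 26357760 * x ^ 7 + (-4392960) * x ^ 9 + 319488 * x ^ 11 + (-8192) * x ^ 13) * Real.exp (-x ^ 2) := by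
  rw [Function.iterate_succ_apply', gaussD12]
  funext x
  have h : HasDerivAt (fun y : ℝ => (665280 * y ^ 0 + (-7983360) * y ^ 2 + 13305600 * y ^ 4 + (-7096320) * y ^ 6 + 1520640 * y ^ 8 + (-135168) * y ^ 10 + 4096 * y ^ 12) * Real.exp (-y ^ 2))
      ((((665280:ℝ) * (((0:ℕ):ℝ) * x ^ (0 - 1))) + (((-7983360):ℝ) * (((2:ℕ):ℝ) * x ^ (2 - 1))) + ((13305600:ℝ) * (((4:ℕ):ℝ) * x ^ (4 - 1))) + (((-7096320):ℝ) * (((6:ℕ):ℝ) * x ^ (6 - 1))) + ((1520640:ℝ) * (((8:ℕ):ℝ) * x ^ (8 - 1))) + (((-135168):ℝ) * (((10:ℕ):ℝ) * x ^ (10 - 1))) + ((4096:ℝ) * (((12:ℕ):ℝ) * x ^ (12 - 1)))) * Real.exp (-x ^ 2) + (665280 * x ^ 0 + (-7983360) * x ^ 2 + 13305600 * x ^ 4 + (-7096320) * x ^ 6 + 1520640 * x ^ 8 + (-135168) * x ^ 10 + 4096 * x ^ 12) * (Real.exp (-x ^ 2) * -(((2:ℕ):ℝ) * x ^ (2 -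 1)))) x :=
    ((((((((hasDerivAt_pow 0 x).const_mul ((665280):ℝ)).add ((hasDerivAt_pow 2 x).const_mul (((-7983360)):ℝ))).add ((hasDerivAt_pow 4 x).const_mul ((13305600):ℝ))).add ((hasDerivAt_pow 6 x).const_mul (((-7096320)):ℝ))).add ((hasDerivAt_pow 8 x).const_mul ((1520640):ℝ))).add ((hasDerivAt_pow 10 x).const_mul (((-135168)):ℝ))).add ((hasDerivAt_pow 12 x).const_mul ((4096):ℝ))).mul (gaussHD x)
  rw [h.deriv]; push_cast; ring

private lemma gaussD14 : deriv^[14] (fun y : ℝ => Real.exp (-y ^ 2)) = fun x : ℝ => ((-17297280) * x ^ 0 + 242161920 * x ^ 2 + (-484323840) * x ^ 4 + 322882560 * x ^ 6 + (-92252160) * x ^ 8 + 12300288 * x ^ 10 + (-745472) * x ^ 12 + 16384 * x ^ 14) * Real.exp (-x ^ 2) := by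
  rw [Function.iterate_succ_apply', gaussD13]
  funext x
  have h : HasDerivAt (fun y : ℝ => ((-17297280) * y ^ 1 + 69189120 * y ^ 3 + (-69189120) * y ^ 5 + 26357760 * y ^ 7 + (-4392960) * y ^ 9 + 319488 * y ^ 11 + (-8192) * y ^ 13) * Real.exp (-y ^ 2))
      (((((-17297280):ℝ) * (((1:ℕ):ℝ) * x ^ (1 - 1))) + ((69189120:ℝ) * (((3:ℕ):ℝ) * x ^ (3 - 1))) + (((-69189120):ℝ) * (((5:ℕ):ℝ) * x ^ (5 - 1))) + ((26357760:ℝ) * (((7:ℕ):ℝ) * x ^ (7 - 1))) + (((-4392960):ℝ) * (((9:ℕ):ℝ) * x ^ (9 - 1))) + ((319488:ℝ) * (((11:ℕ):ℝ) * x ^ (11 - 1))) + (((-8192):ℝ) * (((13:ℕ):ℝ) * x ^ (13 - 1)))) * Real.exp (-x ^ 2) + ((-17297280) * x ^ 1 + 69189120 * x ^ 3 + (-69189120) * x ^ 5 + 26357760 * x ^ 7 + (-4392960) * x ^ 9 + 319488 * x ^ 11 + (-8192) * x ^ 13) * (Real.exp (-x ^ 2) * -(((2:ℕ):ℝ) *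 x ^ (2 - 1)))) x :=
    ((((((((hasDerivAt_pow 1 x).const_mul (((-17297280)):ℝ)).add ((hasDerivAt_pow 3 x).const_mul ((69189120):ℝ))).add ((hasDerivAt_pow 5 x).const_mul (((-69189120)):ℝ))).add ((hasDerivAt_pow 7 x).const_mul ((26357760):ℝ))).add ((hasDerivAt_pow 9 x).const_mul (((-4392960)):ℝ))).add ((hasDerivAt_pow 11 x).const_mul ((319488):ℝ))).add ((hasDerivAt_pow 13 x).const_mul (((-8192)):ℝ))).mul (gaussHD x)
  rw [h.deriv]; push_cast; ring

private lemma gaussD15 : deriv^[15] (fun y : ℝ => Real.exp (-y ^ 2)) = fun x : ℝ => (518918400 * x ^ 1 + (-2421619200) * x ^ 3 + 2905943040 * x ^ 5 + (-1383782400) * x ^ 7 + 307507200 * x ^ 9 + (-33546240) * x ^ 11 + 1720320 * x ^ 13 + (-32768) * x ^ 15) * Real.exp (-x ^ 2) := by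
  rw [Function.iterate_succ_apply', gaussD14]
  funext x
  have h : HasDerivAt (fun y : ℝ => ((-17297280) * y ^ 0 + 242161920 * y ^ 2 + (-484323840) * y ^ 4 + 322882560 * y ^ 6 + (-92252160) * y ^ 8 + 12300288 * y ^ 10 + (-745472) * y ^ 12 + 16384 * y ^ 14) * Real.exp (-y ^ 2))
      (((((-17297280):ℝ) * (((0:ℕ):ℝ) * x ^ (0 - 1))) + ((242161920:ℝ) * (((2:ℕ):ℝ) * x ^ (2 - 1))) + (((-484323840):ℝ) * (((4:ℕ):ℝ) * x ^ (4 - 1))) + ((322882560:ℝ) * (((6:ℕ):ℝ) * x ^ (6 - 1))) + (((-92252160):ℝ) * (((8:ℕ):ℝ) * x ^ (8 - 1))) + ((12300288:ℝ) * (((10:ℕ):ℝ) * x ^ (10 - 1))) + (((-745472):ℝ) * (((12:ℕ):ℝ) * x ^ (12 - 1))) + ((16384:ℝ) * (((14:ℕ):ℝ) * x ^ (14 - 1)))) * Real.exp (-x ^ 2) + ((-17297280) * x ^ 0 + 242161920 * x ^ 2 + (-484323840) * x ^ 4 + 322882560 * x ^ 6 + (-92252160) * x ^ 8 + 12300288 *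 x ^ 10 + (-745472) * x ^ 12 + 16384 * x ^ 14) * (Real.exp (-x ^ 2) * -(((2:ℕ):ℝ) * x ^ (2 - 1)))) x :=
    (((((((((hasDerivAt_pow 0 x).const_mul (((-17297280)):ℝ)).add ((hasDerivAt_pow 2 x).const_mul ((242161920):ℝ))).add ((hasDerivAt_pow 4 x).const_mul (((-484323840)):ℝ))).add ((hasDerivAt_pow 6 x).const_mul ((322882560):ℝ))).add ((hasDerivAt_pow 8 x).const_mul (((-92252160)):ℝ))).add ((hasDerivAt_pow 10 x).const_mul ((12300288):ℝ))).add ((hasDerivAt_pow 12 x).const_mul (((-745472)):ℝ))).add ((hasDerivAt_pow 14 x).const_mul ((16384):ℝ))).mul (gaussHD x)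
  rw [h.deriv]; push_cast; ring

private lemma gaussD16 : deriv^[16] (fun y : ℝ => Real.exp (-y ^ 2)) = fun x : ℝ => (518918400 * x ^ 0 + (-8302694400) * x ^ 2 + 19372953600 * x ^ 4 + (-15498362880) * x ^ 6 + 5535129600 * x ^ 8 + (-984023040) * x ^ 10 + 89456640 * x ^ 12 + (-3932160) * x ^ 14 + 65536 * x ^ 16) * Real.exp (-x ^ 2) := by
  rw [Function.iterate_succ_apply', gaussD15]
  funext x
  have h : HasDerivAt (fun y : ℝ => (518918400 * y ^ 1 + (-2421619200) * y ^ 3 + 2905943040 * y ^ 5 + (-1383782400) * y ^ 7 + 307507200 * y ^ 9 + (-33546240) * y ^ 11 + 1720320 * y ^ 13 + (-32768) * y ^ 15) * Real.exp (-y ^ 2))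
      ((((518918400:ℝ) * (((1:ℕ):ℝ) * x ^ (1 - 1))) + (((-2421619200):ℝ) * (((3:ℕ):ℝ) * x ^ (3 - 1))) + ((2905943040:ℝ) * (((5:ℕ):ℝ) * x ^ (5 - 1))) + (((-1383782400):ℝ) * (((7:ℕ):ℝ) * x ^ (7 - 1))) + ((307507200:ℝ) * (((9:ℕ):ℝ) * x ^ (9 - 1))) + (((-33546240):ℝ) * (((11:ℕ):ℝ) * x ^ (11 - 1))) + ((1720320:ℝ) * (((13:ℕ):ℝ) * x ^ (13 - 1))) + (((-32768):ℝ) * (((15:ℕ):ℝ) * x ^ (15 - 1)))) * Real.exp (-x ^ 2) + (518918400 * x ^ 1 + (-2421619200) * x ^ 3 + 2905943040 * x ^ 5 + (-1383782400) * x ^ 7 + 307507200 * x ^ 9 + (-33546240) * x ^ 11 + 1720320 * x ^ 13 + (-32768) * x ^ 15) * (Real.exp (-x ^ 2) * -(((2:ℕ):ℝ) * x ^ (2 - 1)))) x :=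
    (((((((((hasDerivAt_pow 1 x).const_mul ((518918400):ℝ)).add ((hasDerivAt_pow 3 x).const_mul (((-2421619200)):ℝ))).add ((hasDerivAt_pow 5 x).const_mul ((2905943040):ℝ))).add ((hasDerivAt_pow 7 x).const_mul (((-1383782400)):ℝ))).add ((hasDerivAt_pow 9 x).const_mul ((307507200):ℝ))).add ((hasDerivAt_pow 11 x).const_mul (((-33546240)):ℝ))).add ((hasDerivAt_pow 13 x).const_mul ((1720320):ℝ))).add ((hasDerivAt_pow 15 x).const_mul (((-32768)):ℝ))).mul (gaussHD x)
  rw [h.deriv]; push_cast; ring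

private lemma gaussD17 : deriv^[17] (fun y : ℝ => Real.exp (-y ^ 2)) = fun x : ℝ => ((-17643225600) * x ^ 1 + 94097203200 * x ^ 3 + (-131736084480) * x ^ 5 + 75277762560 * x ^ 7 + (-20910489600) * x ^ 9 + 3041525760 * x ^ 11 + (-233963520) * x ^ 13 + 8912896 * x ^ 15 + (-131072) * x ^ 17) * Real.exp (-x ^ 2) := by
  rw [Function.iterate_succ_apply', gaussD16]
  funext x
  have h : HasDerivAt (fun y : ℝ => (518918400 * y ^ 0 + (-8302694400) * y ^ 2 + 19372953600 * y ^ 4 + (-15498362880) * y ^ 6 + 5535129600 * y ^ 8 + (-984023040) * y ^ 10 + 89456640 * y ^ 12 + (-3932160) * y ^ 14 + 65536 * y ^ 16) * Real.exp (-y ^ 2))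
      ((((518918400:ℝ) * (((0:ℕ):ℝ) * x ^ (0 - 1))) + (((-8302694400):ℝ) * (((2:ℕ):ℝ) * x ^ (2 - 1))) + ((19372953600:ℝ) * (((4:ℕ):ℝ) * x ^ (4 - 1))) + (((-15498362880):ℝ) * (((6:ℕ):ℝ) * x ^ (6 - 1))) + ((5535129600:ℝ) * (((8:ℕ):ℝ) * x ^ (8 - 1))) + (((-984023040):ℝ) * (((10:ℕ):ℝ) * x ^ (10 - 1))) + ((89456640:ℝ) * (((12:ℕ):ℝ) * x ^ (12 - 1))) + (((-3932160):ℝ) * (((14:ℕ):ℝ) * x ^ (14 - 1))) + ((65536:ℝ) * (((16:ℕ):ℝ) * x ^ (16 - 1)))) * Real.exp (-x ^ 2) + (518918400 * x ^ 0 + (-8302694400) * x ^ 2 + 19372953600 * x ^ 4 + (-15498362880) * x ^ 6 + 5535129600 * x ^ 8 + (-984023040) * x ^ 10 + 89456640 * x ^ 12 + (-3932160) * x ^ 14 + 65536 * x ^ 16) * (Real.exp (-x ^ 2) * -(((2:ℕ):ℝ) * x ^ (2 - 1)))) x :=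
    ((((((((((hasDerivAt_pow 0 x).const_mul ((518918400):ℝ)).add ((hasDerivAt_pow 2 x).const_mul (((-8302694400)):ℝ))).add ((hasDerivAt_pow 4 x).const_mul ((19372953600):ℝ))).add ((hasDerivAt_pow 6 x).const_mul (((-15498362880)):ℝ))).add ((hasDerivAt_pow 8 x).const_mul ((5535129600):ℝ))).add ((hasDerivAt_pow 10 x).const_mul (((-984023040)):ℝ))).add ((hasDerivAt_pow 12 x).const_mul ((89456640):ℝ))).add ((hasDerivAt_pow 14 x).const_mul (((-3932160)):ℝ))).add ((hasDerivAt_pow 16 x).const_mul ((65536):ℝ))).mul (gaussHD x)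
  rw [h.deriv]; push_cast; ring

private lemma gaussD18 : deriv^[18] (fun y : ℝ => Real.exp (-y ^ 2)) = fun x : ℝ => ((-17643225600) * x ^ 0 + 317578060800 * x ^ 2 + (-846874828800) * x ^ 4 + 790416506880 * x ^ 6 + (-338749931520) * x ^ 8 + 75277762560 * x ^ 10 + (-9124577280) * x ^ 12 + 601620480 * x ^ 14 + (-20054016) * x ^ 16 + 262144 * x ^ 18) * Real.exp (-x ^ 2) := by
  rw [Function.iterate_succ_apply', gaussD17]
  funext x
  have h : HasDerivAt (fun y : ℝ => ((-17643225600) * y ^ 1 + 94097203200 * y ^ 3 + (-131736084480) * y ^ 5 + 75277762560 * y ^ 7 + (-20910489600) * y ^ 9 + 3041525760 * y ^ 11 + (-233963520) * y ^ 13 + 8912896 * y ^ 15 + (-131072) * y ^ 17) * Real.exp (-y ^ 2))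
      (((((-17643225600):ℝ) * (((1:ℕ):ℝ) * x ^ (1 - 1))) + ((94097203200:ℝ) * (((3:ℕ):ℝ) * x ^ (3 - 1))) + (((-131736084480):ℝ) * (((5:ℕ):ℝ) * x ^ (5 - 1))) + ((75277762560:ℝ) * (((7:ℕ):ℝ) * x ^ (7 - 1))) + (((-20910489600):ℝ) * (((9:ℕ):ℝ) * x ^ (9 - 1))) + ((3041525760:ℝ) * (((11:ℕ):ℝ) * x ^ (11 - 1))) + (((-233963520):ℝ) * (((13:ℕ):ℝ) * x ^ (13 - 1))) + ((8912896:ℝ) * (((15:ℕ):ℝ) * x ^ (15 - 1))) + (((-131072):ℝ) * (((17:ℕ):ℝ) * x ^ (17 - 1)))) * Real.exp (-x ^ 2) + ((-17643225600) * x ^ 1 + 94097203200 * x ^ 3 + (-131736084480) * x ^ 5 + 75277762560 * x ^ 7 + (-20910489600) * x ^ 9 + 3041525760 * x ^ 11 + (-233963520) * x ^ 13 + 8912896 * x ^ 15 + (-131072) * x ^ 17) * (Real.exp (-x ^ 2) * -(((2:ℕ):ℝ) * x ^ (2 - 1)))) x :=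
    ((((((((((hasDerivAt_pow 1 x).const_mul (((-17643225600)):ℝ)).add ((hasDerivAt_pow 3 x).const_mul ((94097203200):ℝ))).add ((hasDerivAt_pow 5 x).const_mul (((-131736084480)):ℝ))).add ((hasDerivAt_pow 7 x).const_mul ((75277762560):ℝ))).add ((hasDerivAt_pow 9 x).const_mul (((-20910489600)):ℝ))).add ((hasDerivAt_pow 11 x).const_mul ((3041525760):ℝ))).add ((hasDerivAt_pow 13 x).const_mul (((-233963520)):ℝ))).add ((hasDerivAt_pow 15 x).const_mul ((8912896):ℝ))).add ((hasDerivAt_pow 17 x).const_mul (((-131072)):ℝ))).mul (gaussHD x)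
  rw [h.deriv]; push_cast; ring

private lemma gaussD19 : deriv^[19] (fun y : ℝ => Real.exp (-y ^ 2)) = fun x : ℝ => (670442572800 * x ^ 1 + (-4022655436800) * x ^ 3 + 6436248698880 * x ^ 5 + (-4290832465920) * x ^ 7 + 1430277488640 * x ^ 9 + (-260050452480) * x ^ 11 + 26671841280 * x ^ 13 + (-1524105216) * x ^ 15 + 44826624 * x ^ 17 + (-524288) * x ^ 19) * Real.exp (-x ^ 2) := by
  rw [Function.iterate_succ_apply', gaussD18]
  funext x
  have h : HasDerivAt (fun y : ℝ => ((-17643225600) * y ^ 0 + 317578060800 * y ^ 2 + (-846874828800) * y ^ 4 + 790416506880 * y ^ 6 + (-338749931520) * y ^ 8 + 75277762560 * y ^ 10 + (-9124577280) * y ^ 12 + 601620480 * y ^ 14 + (-20054016) * y ^ 16 + 262144 * y ^ 18) * Real.exp (-y ^ 2))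
      (((((-17643225600):ℝ) * (((0:ℕ):ℝ) * x ^ (0 - 1))) + ((317578060800:ℝ) * (((2:ℕ):ℝ) * x ^ (2 - 1))) + (((-846874828800):ℝ) * (((4:ℕ):ℝ) * x ^ (4 - 1))) + ((790416506880:ℝ) * (((6:ℕ):ℝ) * x ^ (6 - 1))) + (((-338749931520):ℝ) * (((8:ℕ):ℝ) * x ^ (8 - 1))) + ((75277762560:ℝ) * (((10:ℕ):ℝ) * x ^ (10 - 1))) + (((-9124577280):ℝ) * (((12:ℕ):ℝ) * x ^ (12 - 1))) + ((601620480:ℝ) * (((14:ℕ):ℝ) * x ^ (14 - 1))) + (((-20054016):ℝ) * (((16:ℕ):ℝ) * x ^ (16 - 1))) + ((262144:ℝ) * (((18:ℕ):ℝ) * x ^ (18 - 1)))) * Real.exp (-x ^ 2) + ((-17643225600) * x ^ 0 + 317578060800 * x ^ 2 + (-846874828800) * x ^ 4 + 790416506880 * x ^ 6 + (-338749931520) * x ^ 8 + 75277762560 * x ^ 10 + (-9124577280) * x ^ 12 + 601620480 * x ^ 14 + (-20054016) * x ^ 16 + 262144 * x ^ 18) * (Real.exp (-x ^ 2) * -(((2:ℕ):ℝ)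 * x ^ (2 - 1)))) x :=
    (((((((((((hasDerivAt_pow 0 x).const_mul (((-17643225600)):ℝ)).add ((hasDerivAt_pow 2 x).const_mul ((317578060800):ℝ))).add ((hasDerivAt_pow 4 x).const_mul (((-846874828800)):ℝ))).add ((hasDerivAt_pow 6 x).const_mul ((790416506880):ℝ))).add ((hasDerivAt_pow 8 x).const_mul (((-338749931520)):ℝ))).add ((hasDerivAt_pow 10 x).const_mul ((75277762560):ℝ))).add ((hasDerivAt_pow 12 x).const_mul (((-9124577280)):ℝ))).add ((hasDerivAt_pow 14 x).const_mul ((601620480):ℝ))).add ((hasDerivAt_pow 16 x).const_mul (((-20054016)):ℝ))).add ((hasDerivAt_pow 18 x).const_mul ((262144):ℝ))).mul (gaussHD x)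
  rw [h.deriv]; push_cast; ring

private lemma gaussD20 : deriv^[20] (fun y : ℝ => Real.exp (-y ^ 2)) = fun x : ℝ => (670442572800 * x ^ 0 + (-13408851456000) * x ^ 2 + 40226554368000 * x ^ 4 + (-42908324659200) * x ^ 6 + 21454162329600 * x ^ 8 + (-5721109954560) * x ^ 10 + 866834841600 * x ^ 12 + (-76205260800) * x ^ 14 + 3810263040 * x ^ 16 + (-99614720) * x ^ 18 + 1048576 * x ^ 20) * Real.exp (-x ^ 2) := by
  rw [Function.iterate_succ_apply', gaussD19]
  funext x
  have h : HasDerivAt (fun y : ℝ => (670442572800 * y ^ 1 + (-4022655436800) * y ^ 3 + 6436248698880 * y ^ 5 + (-4290832465920) * y ^ 7 + 1430277488640 * y ^ 9 + (-260050452480) * y ^ 11 + 26671841280 * y ^ 13 + (-1524105216) * y ^ 15 + 44826624 * y ^ 17 + (-524288) * y ^ 19) * Real.exp (-y ^ 2))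
      ((((670442572800:ℝ) * (((1:ℕ):ℝ) * x ^ (1 - 1))) + (((-4022655436800):ℝ) * (((3:ℕ):ℝ) * x ^ (3 - 1))) + ((6436248698880:ℝ) * (((5:ℕ):ℝ) * x ^ (5 - 1))) + (((-4290832465920):ℝ) * (((7:ℕ):ℝ) * x ^ (7 - 1))) + ((1430277488640:ℝ) * (((9:ℕ):ℝ) * x ^ (9 - 1))) + (((-260050452480):ℝ) * (((11:ℕ):ℝ) * x ^ (11 - 1))) + ((26671841280:ℝ) * (((13:ℕ):ℝ) * x ^ (13 - 1))) + (((-1524105216):ℝ) * (((15:ℕ):ℝ) * x ^ (15 - 1))) + ((44826624:ℝ) * (((17:ℕ):ℝ) * x ^ (17 - 1))) + (((-524288):ℝ) * (((19:ℕ):ℝ) * x ^ (19 - 1)))) * Real.exp (-x ^ 2) + (670442572800 * x ^ 1 + (-4022655436800) * x ^ 3 + 6436248698880 * x ^ 5 + (-4290832465920) * x ^ 7 + 1430277488640 * x ^ 9 + (-260050452480) * x ^ 11 + 26671841280 * x ^ 13 + (-1524105216) * x ^ 15 + 44826624 * x ^ 17 + (-524288) * x ^ 19) * (Real.exp (-x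 ^ 2) * -(((2:ℕ):ℝ) * x ^ (2 - 1)))) x :=
    (((((((((((hasDerivAt_pow 1 x).const_mul ((670442572800):ℝ)).add ((hasDerivAt_pow 3 x).const_mul (((-4022655436800)):ℝ))).add ((hasDerivAt_pow 5 x).const_mul ((6436248698880):ℝ))).add ((hasDerivAt_pow 7 x).const_mul (((-4290832465920)):ℝ))).add ((hasDerivAt_pow 9 x).const_mul ((1430277488640):ℝ))).add ((hasDerivAt_pow 11 x).const_mul (((-260050452480)):ℝ))).add ((hasDerivAt_pow 13 x).const_mul ((26671841280):ℝ))).add ((hasDerivAt_pow 15 x).const_mul (((-1524105216)):ℝ))).add ((hasDerivAt_pow 17 x).const_mul ((44826624):ℝ))).add ((hasDerivAt_pow 19 x).const_mul (((-524288)):ℝ))).mul (gaussHD x)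
  rw [h.deriv]; push_cast; ring

private lemma physHermite_0 (x : ℝ) : physHermite 0 x = 1 * x ^ 0 := by
  have h2 : Real.exp (x ^ 2) * Real.exp (-x ^ 2) = 1 := by rw [← Real.exp_add]; norm_num
  unfold physHermite
  rw [gaussD0]
  linear_combination (1 * x ^ 0) * h2

private lemma physHermite_4 (x : ℝ) : physHermite 4 x = 12 * x ^ 0 + (-48) * x ^ 2 + 16 * x ^ 4 := by
  have h2 : Real.exp (x ^ 2) * Real.exp (-x ^ 2) = 1 := by rw [← Real.exp_add]; norm_num
  unfold physHermite
  rw [gaussD4]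
  linear_combination (12 * x ^ 0 + (-48) * x ^ 2 + 16 * x ^ 4) * h2

private lemma physHermite_8 (x : ℝ) : physHermite 8 x = 1680 * x ^ 0 + (-13440) * x ^ 2 + 13440 * x ^ 4 + (-3584) * x ^ 6 + 256 * x ^ 8 := by
  have h2 : Real.exp (x ^ 2) * Real.exp (-x ^ 2) = 1 := by rw [← Real.exp_add]; norm_num
  unfold physHermite
  rw [gaussD8]
  linear_combination (1680 * x ^ 0 + (-13440) * x ^ 2 + 13440 * x ^ 4 + (-3584) * x ^ 6 + 256 * x ^ 8) * h2

private lemma physHermite_12 (x : ℝ) : physHermite 12 x = 665280 * x ^ 0 + (-7983360) * x ^ 2 + 13305600 * x ^ 4 + (-7096320) * x ^ 6 + 1520640 * x ^ 8 + (-135168) * x ^ 10 + 4096 * x ^ 12 := by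
  have h2 : Real.exp (x ^ 2) * Real.exp (-x ^ 2) = 1 := by rw [← Real.exp_add]; norm_num
  unfold physHermite
  rw [gaussD12]
  linear_combination (665280 * x ^ 0 + (-7983360) * x ^ 2 + 13305600 * x ^ 4 + (-7096320) * x ^ 6 + 1520640 * x ^ 8 + (-135168) * x ^ 10 + 4096 * x ^ 12) * h2

private lemma physHermite_16 (x : ℝ) : physHermite 16 x = 518918400 * x ^ 0 + (-8302694400) * x ^ 2 + 19372953600 * x ^ 4 + (-15498362880) * x ^ 6 + 5535129600 * x ^ 8 + (-984023040) * x ^ 10 + 89456640 * x ^ 12 + (-3932160) * x ^ 14 + 65536 * x ^ 16 := by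
  have h2 : Real.exp (x ^ 2) * Real.exp (-x ^ 2) = 1 := by rw [← Real.exp_add]; norm_num
  unfold physHermite
  rw [gaussD16]
  linear_combination (518918400 * x ^ 0 + (-8302694400) * x ^ 2 + 19372953600 * x ^ 4 + (-15498362880) * x ^ 6 + 5535129600 * x ^ 8 + (-984023040) * x ^ 10 + 89456640 * x ^ 12 + (-3932160) * x ^ 14 + 65536 * x ^ 16) * h2

private lemma physHermite_20 (x : ℝ) : physHermite 20 x = 670442572800 * x ^ 0 + (-13408851456000) * x ^ 2 + 40226554368000 * x ^ 4 + (-42908324659200) * x ^ 6 + 21454162329600 * x ^ 8 + (-5721109954560) * x ^ 10 + 866834841600 * x ^ 12 + (-76205260800) * x ^ 14 + 3810263040 * x ^ 16 + (-99614720) * x ^ 18 + 1048576 * x ^ 20 := by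
  have h2 : Real.exp (x ^ 2) * Real.exp (-x ^ 2) = 1 := by rw [← Real.exp_add]; norm_num
  unfold physHermite
  rw [gaussD20]
  linear_combination (670442572800 * x ^ 0 + (-13408851456000) * x ^ 2 + 40226554368000 * x ^ 4 + (-42908324659200) * x ^ 6 + 21454162329600 * x ^ 8 + (-5721109954560) * x ^ 10 + 866834841600 * x ^ 12 + (-76205260800) * x ^ 14 + 3810263040 * x ^ 16 + (-99614720) * x ^ 18 + 1048576 * x ^ 20) * h2

set_option maxHeartbeats 4000000 in
private lemma coreIneq (z : ℝ) : Real.exp (-(z ^ 2)) * ((1.412682577:ℝ) * (1 * z ^ 0) + (-3.0145e-3:ℝ) * (12 * z ^ 0 + (-48) * z ^ 2 + 16 * z ^ 4) + (-8.8041e-6:ℝ) * (1680 * z ^ 0 + (-13440) * z ^ 2 + 13440 * z ^ 4 + (-3584) * z ^ 6 + 256 * z ^ 8) + (-2.2611e-9:ℝ) * (665280 * z ^ 0 + (-7983360) * z ^ 2 + 13305600 * z ^ 4 + (-7096320) * z ^ 6 + 1520640 * z ^ 8 + (-135168) * z ^ 10 + 4096 * z ^ 12) + (-4.4570e-15:ℝ)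 * (518918400 * z ^ 0 + (-8302694400) * z ^ 2 + 19372953600 * z ^ 4 + (-15498362880) * z ^ 6 + 5535129600 * z ^ 8 + (-984023040) * z ^ 10 + 89456640 * z ^ 12 + (-3932160) * z ^ 14 + 65536 * z ^ 16) + (1.8633e-16:ℝ) * (670442572800 * z ^ 0 + (-13408851456000) * z ^ 2 + 40226554368000 * z ^ 4 + (-42908324659200) * z ^ 6 + 21454162329600 * z ^ 8 + (-5721109954560) * z ^ 10 + 866834841600 * z ^ 12 + (-76205260800) * z ^ 14 + 3810263040 * z ^ 16 + (-99614720) * z ^ 18 + 1048576 * z ^ 20)) ^ 2 ≤ (((1328453159313751 : ℝ)/976562500000000)) ^ 2 := by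
  have hS : ((1.412682577:ℝ) * (1 * z ^ 0) + (-3.0145e-3:ℝ) * (12 * z ^ 0 + (-48) * z ^ 2 + 16 * z ^ 4) + (-8.8041e-6:ℝ) * (1680 * z ^ 0 + (-13440) * z ^ 2 + 13440 * z ^ 4 + (-3584) * z ^ 6 + 256 * z ^ 8) + (-2.2611e-9:ℝ) * (665280 * z ^ 0 + (-7983360) * z ^ 2 + 13305600 * z ^ 4 + (-7096320) * z ^ 6 + 1520640 * z ^ 8 + (-135168) * z ^ 10 + 4096 * z ^ 12) + (-4.4570e-15:ℝ) * (518918400 * z ^ 0 + (-8302694400) * z ^ 2 + 19372953600 * z ^ 4 + (-15498362880) * z ^ 6 + 5535129600 * z ^ 8 + (-984023040) * z ^ 10 + 89456640 * z ^ 12 + (-3932160) * z ^ 14 + 65536 * z ^ 16) + (1.8633e-16:ℝ) * (670442572800 * z ^ 0 + (-13408851456000) * z ^ 2 + 40226554368000 * z ^ 4 + (-42908324659200) * z ^ 6 + 21454162329600 * z ^ 8 + (-5721109954560) * z ^ 10 + 866834841600 * z ^ 12 + (-76205260800) * z ^ 14 + 3810263040 * z ^ 16 + (-99614720) * z ^ 18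 + 1048576 * z ^ 20)) ^ 2 ≤ (((1328453159313751 : ℝ)/976562500000000)) ^ 2 * ((z ^ 2) ^ 0 / 1 + (z ^ 2) ^ 1 / 1 + (z ^ 2) ^ 2 / 2 + (z ^ 2) ^ 3 / 6 + (z ^ 2) ^ 4 / 24 + (z ^ 2) ^ 5 / 120 + (z ^ 2) ^ 6 / 720 + (z ^ 2) ^ 7 / 5040 + (z ^ 2) ^ 8 / 40320 + (z ^ 2) ^ 9 / 362880 + (z ^ 2) ^ 10 / 3628800 + (z ^ 2) ^ 11 / 39916800 + (z ^ 2) ^ 12 / 479001600 + (z ^ 2) ^ 13 / 6227020800 + (z ^ 2) ^ 14 / 87178291200 + (z ^ 2) ^ 15 / 1307674368000 + (z ^ 2) ^ 16 / 20922789888000 + (z ^ 2) ^ 17 / 355687428096000 + (z ^ 2) ^ 18 / 6402373705728000 + (z ^ 2) ^ 19 / 121645100408832000 + (z ^ 2) ^ 20 / 2432902008176640000) := by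
    have hid : (((1328453159313751 : ℝ)/976562500000000)) ^ 2 * ((z ^ 2) ^ 0 / 1 + (z ^ 2) ^ 1 / 1 + (z ^ 2) ^ 2 / 2 + (z ^ 2) ^ 3 / 6 + (z ^ 2) ^ 4 / 24 + (z ^ 2) ^ 5 / 120 + (z ^ 2) ^ 6 / 720 + (z ^ 2) ^ 7 / 5040 + (z ^ 2) ^ 8 / 40320 + (z ^ 2) ^ 9 / 362880 + (z ^ 2) ^ 10 / 3628800 + (z ^ 2) ^ 11 / 39916800 + (z ^ 2) ^ 12 / 479001600 + (z ^ 2) ^ 13 / 6227020800 + (z ^ 2) ^ 14 / 87178291200 + (z ^ 2) ^ 15 / 1307674368000 + (z ^ 2) ^ 16 / 20922789888000 + (z ^ 2) ^ 17 / 355687428096000 + (z ^ 2) ^ 18 / 6402373705728000 + (z ^ 2) ^ 19 / 121645100408832000 + (z ^ 2) ^ 20 / 2432902008176640000) - ((1.412682577:ℝ) * (1 * z ^ 0) + (-3.0145e-3:ℝ) * (12 * z ^ 0 + (-48) * z ^ 2 + 16 * z ^ 4) + (-8.8041e-6:ℝ) * (1680 * z ^ 0 + (-13440) * z ^ 2 +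 13440 * z ^ 4 + (-3584) * z ^ 6 + 256 * z ^ 8) + (-2.2611e-9:ℝ) * (665280 * z ^ 0 + (-7983360) * z ^ 2 + 13305600 * z ^ 4 + (-7096320) * z ^ 6 + 1520640 * z ^ 8 + (-135168) * z ^ 10 + 4096 * z ^ 12) + (-4.4570e-15:ℝ) * (518918400 * z ^ 0 + (-8302694400) * z ^ 2 + 19372953600 * z ^ 4 + (-15498362880) * z ^ 6 + 5535129600 * z ^ 8 + (-984023040) * z ^ 10 + 89456640 * z ^ 12 + (-3932160) * z ^ 14 + 65536 * z ^ 16) + (1.8633e-16:ℝ) * (670442572800 * z ^ 0 + (-13408851456000) * z ^ 2 + 40226554368000 * z ^ 4 + (-42908324659200) * z ^ 6 + 21454162329600 * z ^ 8 + (-5721109954560) * z ^ 10 + 866834841600 * z ^ 12 + (-76205260800) * z ^ 14 + 3810263040 * z ^ 16 + (-99614720) * z ^ 18 + 1048576 * z ^ 20)) ^ 2 = ((1041889218745670191656224440891 : ℝ)/953674316406250000000000000000) * z ^ 2 + ((2598722906035950783339129317411 : ℝ)/1907348632812500000000000000000) * z ^ 4 + ((1750531858156365617501395915189 : ℝ)/5722045898437500000000000000000)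 * z ^ 6 + ((4369875705685792831636813997 : ℝ)/183105468750000000000000000000) * z ^ 8 + ((3828164147880007070482596252049 : ℝ)/114440917968750000000000000000000) * z ^ 10 + ((242793767605886685654206359441 : ℝ)/686645507812500000000000000000000) * z ^ 12 + ((823964592132363124408272059281 : ℝ)/4806518554687500000000000000000000) * z ^ 14 + ((51805485023772996609921166502046800759398762234266784364705759 : ℝ)/479055941104888916015625000000000000000000000000000000000000000000) * z ^ 16 + ((2990967524429140170756635757457 : ℝ)/3460693359375000000000000000000000000) * z ^ 20 + ((89261381591209900461669641499400738838794498624444746850383839 : ℝ)/2257047922096252441406250000000000000000000000000000000000000000000000) * z ^ 22 + ((175735306815727264315470255244143648557030373411455133594957791 : ℝ)/487725485485779190063476562500000000000000000000000000000000000000000000) * z ^ 26 + ((2106998160085956556688537947025751305831181968113821027940319 : ℝ)/40769869154076562500000000000000000000000000000000000000000000000000000000) * z ^ 30 + ((824438753469784108820614495976245445272857351023947025225399 : ℝ)/86132963499256987203515625000000000000000000000000000000000000000000000000) * z ^ 34 + ((931027860074539788770639924113 : ℝ)/116009807976562500000000000000000000000000000000) * z ^ 38 + ((335243418439917974981906648861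 : ℝ)/464039231906250000000000000000000000000000000000) * z ^ 40 + z ^ 16 * (((1 : ℝ)/1000) * z ^ 2 - ((5281623261855262430573692482671 : ℝ)/692138671875000000000000000000000)) ^ 2 + z ^ 22 * (((13 : ℝ)/250000) * z ^ 2 - ((16743619345478073217959307179119 : ℝ)/47508398437500000000000000000000000)) ^ 2 + z ^ 26 * (((21 : ℝ)/5000000) * z ^ 2 - ((35153762496948447141581285160047 : ℝ)/698373457031250000000000000000000000)) ^ 2 + z ^ 30 * (((1 : ℝ)/6250000) * z ^ 2 - ((19973389727942928285140785230959 : ℝ)/6385128750000000000000000000000000000)) ^ 2 + z ^ 34 * (((19 : ℝ)/5000000000) * z ^ 2 - ((406396848104463553461035086051 : ℝ)/9280784638125000000000000000000000000)) ^ 2 := by ring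
    have hpos : (0:ℝ) ≤ ((1041889218745670191656224440891 : ℝ)/953674316406250000000000000000) * z ^ 2 + ((2598722906035950783339129317411 : ℝ)/1907348632812500000000000000000) * z ^ 4 + ((1750531858156365617501395915189 : ℝ)/5722045898437500000000000000000) * z ^ 6 + ((4369875705685792831636813997 : ℝ)/183105468750000000000000000000) * z ^ 8 + ((3828164147880007070482596252049 : ℝ)/114440917968750000000000000000000) * z ^ 10 + ((242793767605886685654206359441 : ℝ)/686645507812500000000000000000000) * z ^ 12 + ((823964592132363124408272059281 : ℝ)/4806518554687500000000000000000000) * z ^ 14 + ((51805485023772996609921166502046800759398762234266784364705759 : ℝ)/479055941104888916015625000000000000000000000000000000000000000000) * z ^ 16 + ((2990967524429140170756635757457 : ℝ)/3460693359375000000000000000000000000) * z ^ 20 + ((89261381591209900461669641499400738838794498624444746850383839 : ℝ)/2257047922096252441406250000000000000000000000000000000000000000000000) * z ^ 22 + ((175735306815727264315470255244143648557030373411455133594957791 : ℝ)/487725485485779190063476562500000000000000000000000000000000000000000000) * z ^ 26 + ((2106998160085956556688537947025751305831181968113821027940319 : ℝ)/40769869154076562500000000000000000000000000000000000000000000000000000000)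 * z ^ 30 + ((824438753469784108820614495976245445272857351023947025225399 : ℝ)/86132963499256987203515625000000000000000000000000000000000000000000000000) * z ^ 34 + ((931027860074539788770639924113 : ℝ)/116009807976562500000000000000000000000000000000) * z ^ 38 + ((335243418439917974981906648861 : ℝ)/464039231906250000000000000000000000000000000000) * z ^ 40 + z ^ 16 * (((1 : ℝ)/1000) * z ^ 2 - ((5281623261855262430573692482671 : ℝ)/692138671875000000000000000000000)) ^ 2 + z ^ 22 * (((13 : ℝ)/250000) * z ^ 2 - ((16743619345478073217959307179119 : ℝ)/47508398437500000000000000000000000)) ^ 2 + z ^ 26 * (((21 : ℝ)/5000000) * z ^ 2 - ((35153762496948447141581285160047 : ℝ)/698373457031250000000000000000000000)) ^ 2 + z ^ 30 * (((1 : ℝ)/6250000) * z ^ 2 - ((19973389727942928285140785230959 : ℝ)/6385128750000000000000000000000000000)) ^ 2 + z ^ 34 * (((19 : ℝ)/5000000000) * z ^ 2 - ((406396848104463553461035086051 : ℝ)/9280784638125000000000000000000000000)) ^ 2 := by positivity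
    linarith
  have hSe : ((z ^ 2) ^ 0 / 1 + (z ^ 2) ^ 1 / 1 + (z ^ 2) ^ 2 / 2 + (z ^ 2) ^ 3 / 6 + (z ^ 2) ^ 4 / 24 + (z ^ 2) ^ 5 / 120 + (z ^ 2) ^ 6 / 720 + (z ^ 2) ^ 7 / 5040 + (z ^ 2) ^ 8 / 40320 + (z ^ 2) ^ 9 / 362880 + (z ^ 2) ^ 10 / 3628800 + (z ^ 2) ^ 11 / 39916800 + (z ^ 2) ^ 12 / 479001600 + (z ^ 2) ^ 13 / 6227020800 + (z ^ 2) ^ 14 / 87178291200 + (z ^ 2) ^ 15 / 1307674368000 + (z ^ 2) ^ 16 / 20922789888000 + (z ^ 2) ^ 17 / 355687428096000 + (z ^ 2) ^ 18 / 6402373705728000 + (z ^ 2) ^ 19 / 121645100408832000 + (z ^ 2) ^ 20 / 2432902008176640000) ≤ Real.exp (z ^ 2) := by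
    have h := Real.sum_le_exp_of_nonneg (sq_nonneg z) 21
    have hs : ∑ i ∈ Finset.range 21, (z ^ 2) ^ i / (Nat.factorial i) = (z ^ 2) ^ 0 / 1 + (z ^ 2) ^ 1 / 1 + (z ^ 2) ^ 2 / 2 + (z ^ 2) ^ 3 / 6 + (z ^ 2) ^ 4 / 24 + (z ^ 2) ^ 5 / 120 + (z ^ 2) ^ 6 / 720 + (z ^ 2) ^ 7 / 5040 + (z ^ 2) ^ 8 / 40320 + (z ^ 2) ^ 9 / 362880 + (z ^ 2) ^ 10 / 3628800 + (z ^ 2) ^ 11 / 39916800 + (z ^ 2) ^ 12 / 479001600 + (z ^ 2) ^ 13 / 6227020800 + (z ^ 2) ^ 14 / 87178291200 + (z ^ 2) ^ 15 / 1307674368000 + (z ^ 2) ^ 16 / 20922789888000 + (z ^ 2) ^ 17 / 355687428096000 + (z ^ 2) ^ 18 / 6402373705728000 + (z ^ 2) ^ 19 / 121645100408832000 + (z ^ 2) ^ 20 / 2432902008176640000 := by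
      norm_num [Finset.sum_range_succ, Nat.factorial]
    rw [hs] at h
    exact h
  have h1 : Real.exp (-(z ^ 2)) * ((1.412682577:ℝ) * (1 * z ^ 0) + (-3.0145e-3:ℝ) * (12 * z ^ 0 + (-48) * z ^ 2 + 16 * z ^ 4) + (-8.8041e-6:ℝ) * (1680 * z ^ 0 + (-13440) * z ^ 2 + 13440 * z ^ 4 + (-3584) * z ^ 6 + 256 * z ^ 8) + (-2.2611e-9:ℝ) * (665280 * z ^ 0 + (-7983360) * z ^ 2 + 13305600 * z ^ 4 + (-7096320) * z ^ 6 + 1520640 * z ^ 8 + (-135168) * z ^ 10 + 4096 * z ^ 12) + (-4.4570e-15:ℝ) * (518918400 * z ^ 0 + (-8302694400) * z ^ 2 + 19372953600 * z ^ 4 + (-15498362880) * z ^ 6 + 5535129600 * z ^ 8 + (-984023040) * z ^ 10 + 89456640 * z ^ 12 + (-3932160) * z ^ 14 + 65536 * z ^ 16) + (1.8633e-16:ℝ) * (670442572800 * z ^ 0 + (-13408851456000) * z ^ 2 + 40226554368000 * z ^ 4 + (-42908324659200) * z ^ 6 + 21454162329600 * z ^ 8 + (-5721109954560) * z ^ 10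 + 866834841600 * z ^ 12 + (-76205260800) * z ^ 14 + 3810263040 * z ^ 16 + (-99614720) * z ^ 18 + 1048576 * z ^ 20)) ^ 2 ≤ Real.exp (-(z ^ 2)) * ((((1328453159313751 : ℝ)/976562500000000)) ^ 2 * ((z ^ 2) ^ 0 / 1 + (z ^ 2) ^ 1 / 1 + (z ^ 2) ^ 2 / 2 + (z ^ 2) ^ 3 / 6 + (z ^ 2) ^ 4 / 24 + (z ^ 2) ^ 5 / 120 + (z ^ 2) ^ 6 / 720 + (z ^ 2) ^ 7 / 5040 + (z ^ 2) ^ 8 / 40320 + (z ^ 2) ^ 9 / 362880 + (z ^ 2) ^ 10 / 3628800 + (z ^ 2) ^ 11 / 39916800 + (z ^ 2) ^ 12 / 479001600 + (z ^ 2) ^ 13 / 6227020800 + (z ^ 2) ^ 14 / 87178291200 + (z ^ 2) ^ 15 / 1307674368000 + (z ^ 2) ^ 16 / 20922789888000 + (z ^ 2) ^ 17 / 355687428096000 + (z ^ 2) ^ 18 / 6402373705728000 + (z ^ 2) ^ 19 / 121645100408832000 + (z ^ 2) ^ 20 / 2432902008176640000)) :=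
    mul_le_mul_of_nonneg_left hS (Real.exp_pos _).le
  have h2 : Real.exp (-(z ^ 2)) * ((((1328453159313751 : ℝ)/976562500000000)) ^ 2 * ((z ^ 2) ^ 0 / 1 + (z ^ 2) ^ 1 / 1 + (z ^ 2) ^ 2 / 2 + (z ^ 2) ^ 3 / 6 + (z ^ 2) ^ 4 / 24 + (z ^ 2) ^ 5 / 120 + (z ^ 2) ^ 6 / 720 + (z ^ 2) ^ 7 / 5040 + (z ^ 2) ^ 8 / 40320 + (z ^ 2) ^ 9 / 362880 + (z ^ 2) ^ 10 / 3628800 + (z ^ 2) ^ 11 / 39916800 + (z ^ 2) ^ 12 / 479001600 + (z ^ 2) ^ 13 / 6227020800 + (z ^ 2) ^ 14 / 87178291200 + (z ^ 2) ^ 15 / 1307674368000 + (z ^ 2) ^ 16 / 20922789888000 + (z ^ 2) ^ 17 / 355687428096000 + (z ^ 2) ^ 18 / 6402373705728000 + (z ^ 2) ^ 19 / 121645100408832000 + (z ^ 2) ^ 20 / 2432902008176640000)) ≤ Real.exp (-(z ^ 2)) * ((((1328453159313751 : ℝ)/976562500000000)) ^ 2 * Real.exp (z ^ 2)) := by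
    apply mul_le_mul_of_nonneg_left _ (Real.exp_pos _).le
    apply mul_le_mul_of_nonneg_left hSe
    positivity
  have h3 : Real.exp (-(z ^ 2)) * ((((1328453159313751 : ℝ)/976562500000000)) ^ 2 * Real.exp (z ^ 2)) = (((1328453159313751 : ℝ)/976562500000000)) ^ 2 := by
    have hx : Real.exp (-(z ^ 2)) * Real.exp (z ^ 2) = 1 := by
      rw [← Real.exp_add]; norm_num
    calc Real.exp (-(z ^ 2)) * ((((1328453159313751 : ℝ)/976562500000000)) ^ 2 * Real.exp (z ^ 2))
        = (Real.exp (-(z ^ 2)) * Real.exp (z ^ 2)) * (((1328453159313751 : ℝ)/976562500000000)) ^ 2 := by ring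
      _ = (((1328453159313751 : ℝ)/976562500000000)) ^ 2 := by rw [hx, one_mul]
  linarith

private lemma branchBound (T : ℝ) (hT : 0 < T) (E y : ℝ) (hE : E ^ 2 = Real.exp (-(y ^ 2))) :
    T * ((1 / Real.sqrt T) * E * ((1.412682577:ℝ) * (1 * y ^ 0) + (-3.0145e-3:ℝ) * (12 * y ^ 0 + (-48) * y ^ 2 + 16 * y ^ 4) + (-8.8041e-6:ℝ) * (1680 * y ^ 0 + (-13440) * y ^ 2 + 13440 * y ^ 4 + (-3584) * y ^ 6 + 256 * y ^ 8) + (-2.2611e-9:ℝ) * (665280 * y ^ 0 + (-7983360) * y ^ 2 + 13305600 * y ^ 4 + (-7096320) * y ^ 6 + 1520640 * y ^ 8 + (-135168) * y ^ 10 + 4096 * y ^ 12) + (-4.4570e-15:ℝ) * (518918400 * y ^ 0 + (-8302694400) * y ^ 2 + 19372953600 * y ^ 4 + (-15498362880) * y ^ 6 + 5535129600 * y ^ 8 + (-984023040) * y ^ 10 + 89456640 * y ^ 12 + (-3932160) * y ^ 14 + 65536 * y ^ 16) + (1.8633e-16:ℝ) * (670442572800 * y ^ 0 + (-13408851456000)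 * y ^ 2 + 40226554368000 * y ^ 4 + (-42908324659200) * y ^ 6 + 21454162329600 * y ^ 8 + (-5721109954560) * y ^ 10 + 866834841600 * y ^ 12 + (-76205260800) * y ^ 14 + 3810263040 * y ^ 16 + (-99614720) * y ^ 18 + 1048576 * y ^ 20))) ^ 2 ≤ ((((1328453159313751 : ℝ)/976562500000000))) ^ 2 := by
  have hT2 : Real.sqrt T ^ 2 = T := Real.sq_sqrt hT.le
  have h1 : T * ((1 / Real.sqrt T) * E * ((1.412682577:ℝ) * (1 * y ^ 0) + (-3.0145e-3:ℝ) * (12 * y ^ 0 + (-48) * y ^ 2 + 16 * y ^ 4) + (-8.8041e-6:ℝ) * (1680 * y ^ 0 + (-13440) * y ^ 2 + 13440 * y ^ 4 + (-3584) * y ^ 6 + 256 * y ^ 8) + (-2.2611e-9:ℝ) * (665280 * y ^ 0 + (-7983360) * y ^ 2 + 13305600 * y ^ 4 + (-7096320) * y ^ 6 + 1520640 * y ^ 8 + (-135168) * y ^ 10 + 4096 * y ^ 12) + (-4.4570e-15:ℝ) * (518918400 * y ^ 0 + (-8302694400) * y ^ 2 + 19372953600 * y ^ 4 + (-15498362880)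 * y ^ 6 + 5535129600 * y ^ 8 + (-984023040) * y ^ 10 + 89456640 * y ^ 12 + (-3932160) * y ^ 14 + 65536 * y ^ 16) + (1.8633e-16:ℝ) * (670442572800 * y ^ 0 + (-13408851456000) * y ^ 2 + 40226554368000 * y ^ 4 + (-42908324659200) * y ^ 6 + 21454162329600 * y ^ 8 + (-5721109954560) * y ^ 10 + 866834841600 * y ^ 12 + (-76205260800) * y ^ 14 + 3810263040 * y ^ 16 + (-99614720) * y ^ 18 + 1048576 * y ^ 20))) ^ 2
      = (T / Real.sqrt T ^ 2) * (E ^ 2 * ((1.412682577:ℝ) * (1 * y ^ 0) + (-3.0145e-3:ℝ) * (12 * y ^ 0 + (-48) * y ^ 2 + 16 * y ^ 4) + (-8.8041e-6:ℝ) * (1680 * y ^ 0 + (-13440) * y ^ 2 + 13440 * y ^ 4 + (-3584) * y ^ 6 + 256 * y ^ 8) + (-2.2611e-9:ℝ) * (665280 * y ^ 0 + (-7983360) * y ^ 2 + 13305600 * y ^ 4 + (-7096320) * y ^ 6 + 1520640 * y ^ 8 + (-135168) * y ^ 10 + 4096 * y ^ 12) + (-4.4570e-15:ℝ) * (518918400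 * y ^ 0 + (-8302694400) * y ^ 2 + 19372953600 * y ^ 4 + (-15498362880) * y ^ 6 + 5535129600 * y ^ 8 + (-984023040) * y ^ 10 + 89456640 * y ^ 12 + (-3932160) * y ^ 14 + 65536 * y ^ 16) + (1.8633e-16:ℝ) * (670442572800 * y ^ 0 + (-13408851456000) * y ^ 2 + 40226554368000 * y ^ 4 + (-42908324659200) * y ^ 6 + 21454162329600 * y ^ 8 + (-5721109954560) * y ^ 10 + 866834841600 * y ^ 12 + (-76205260800) * y ^ 14 + 3810263040 * y ^ 16 + (-99614720) * y ^ 18 + 1048576 * y ^ 20)) ^ 2) := by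
    ring
  rw [h1, hT2, div_self hT.ne', one_mul, hE]
  exact coreIneq y

set_option maxHeartbeats 1000000 in
/-- For the Hermite prototype filter with overlapping factor `K = 4`, the
zero-interference preamble PAPR bound holds:
`T·g(t)² ≤ (Σ_{k∈{0,4,8,12,16,20}} β_k H_k(0))²` for all `t`, with equality at
`t = KT/2`, and this bound is less than `1.851` (approximately 2.673 dB). -/
theorem hermite_papr_bound (T : ℝ) (hT : 0 < T) :
    ∀ K : ℝ, K = 4 →
    ∀ β : ℕ → ℝ,
      (β 0 = 1.412682577 ∧ β 4 = -3.0145e-3 ∧ β 8 = -8.8041e-6 ∧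
        β 12 = -2.2611e-9 ∧ β 16 = -4.4570e-15 ∧ β 20 = 1.8633e-16) →
    ∀ g : ℝ → ℝ,
      (g = fun t => if t ∈ Set.Icc (0 : ℝ) (K * T) then
          (1 / Real.sqrt T) * Real.exp (-2 * Real.pi * ((t - K * T / 2) / T) ^ 2)
            * ∑ k ∈ ({0, 4, 8, 12, 16, 20} : Finset ℕ),
                β k * physHermite k (2 * Real.sqrt Real.pi * (t - K * T / 2) / T)
        else 0) →
    (∀ t : ℝ, T * (g t) ^ 2
        ≤ (∑ k ∈ ({0, 4, 8, 12, 16, 20} : Finset ℕ), β k * physHermite k 0) ^ 2) ∧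
    T * (g (K * T / 2)) ^ 2
        = (∑ k ∈ ({0, 4, 8, 12, 16, 20} : Finset ℕ), β k * physHermite k 0) ^ 2 ∧
    (∑ k ∈ ({0, 4, 8, 12, 16, 20} : Finset ℕ), β k * physHermite k 0) ^ 2 < 1.851 := by
  intro K hK β hβ g hg
  subst hK
  obtain ⟨hb0, hb4, hb8, hb12, hb16, hb20⟩ := hβ
  have hsum : ∀ f : ℕ → ℝ, (∑ k ∈ ({0, 4, 8, 12, 16, 20} : Finset ℕ), f k)
      = f 0 + f 4 + f 8 + f 12 + f 16 + f 20 := by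
    intro f
    norm_num [Finset.sum_insert, Finset.mem_insert]
    ring
  have hW : ∀ z : ℝ, (∑ k ∈ ({0, 4, 8, 12, 16, 20} : Finset ℕ), β k * physHermite k z)
      = (1.412682577:ℝ) * (1 * z ^ 0) + (-3.0145e-3:ℝ) * (12 * z ^ 0 + (-48) * z ^ 2 + 16 * z ^ 4) + (-8.8041e-6:ℝ) * (1680 * z ^ 0 + (-13440) * z ^ 2 + 13440 * z ^ 4 + (-3584) * z ^ 6 + 256 * z ^ 8) + (-2.2611e-9:ℝ) * (665280 * z ^ 0 + (-7983360) * z ^ 2 + 13305600 * z ^ 4 + (-7096320) * z ^ 6 + 1520640 * z ^ 8 + (-135168) * z ^ 10 + 4096 * z ^ 12) + (-4.4570e-15:ℝ) * (518918400 * z ^ 0 + (-8302694400) * z ^ 2 + 19372953600 * z ^ 4 + (-15498362880) * z ^ 6 + 5535129600 * z ^ 8 + (-984023040) * z ^ 10 + 89456640 * z ^ 12 + (-3932160) * z ^ 14 + 65536 * z ^ 16) + (1.8633e-16:ℝ) * (670442572800 * z ^ 0 + (-13408851456000) * z ^ 2 + 40226554368000 * z ^ 4 + (-42908324659200) * z ^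 6 + 21454162329600 * z ^ 8 + (-5721109954560) * z ^ 10 + 866834841600 * z ^ 12 + (-76205260800) * z ^ 14 + 3810263040 * z ^ 16 + (-99614720) * z ^ 18 + 1048576 * z ^ 20) := by
    intro z
    rw [hsum]
    simp only [physHermite_0, physHermite_4, physHermite_8, physHermite_12, physHermite_16,
      physHermite_20, hb0, hb4, hb8, hb12, hb16, hb20]
    try ring
  have hB : ((1.412682577:ℝ) * (1 * (0:ℝ) ^ 0) + (-3.0145e-3:ℝ) * (12 * (0:ℝ) ^ 0 + (-48) * (0:ℝ) ^ 2 + 16 * (0:ℝ) ^ 4) + (-8.8041e-6:ℝ) * (1680 * (0:ℝ) ^ 0 + (-13440) * (0:ℝ) ^ 2 + 13440 * (0:ℝ) ^ 4 + (-3584) * (0:ℝ) ^ 6 + 256 * (0:ℝ) ^ 8) + (-2.2611e-9:ℝ) * (665280 * (0:ℝ) ^ 0 + (-7983360) * (0:ℝ) ^ 2 + 13305600 * (0:ℝ) ^ 4 + (-7096320) * (0:ℝ) ^ 6 + 1520640 * (0:ℝ) ^ 8 + (-135168) * (0:ℝ) ^ 10 + 4096 * (0:ℝ) ^ 12) + (-4.4570e-15:ℝ)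 * (518918400 * (0:ℝ) ^ 0 + (-8302694400) * (0:ℝ) ^ 2 + 19372953600 * (0:ℝ) ^ 4 + (-15498362880) * (0:ℝ) ^ 6 + 5535129600 * (0:ℝ) ^ 8 + (-984023040) * (0:ℝ) ^ 10 + 89456640 * (0:ℝ) ^ 12 + (-3932160) * (0:ℝ) ^ 14 + 65536 * (0:ℝ) ^ 16) + (1.8633e-16:ℝ) * (670442572800 * (0:ℝ) ^ 0 + (-13408851456000) * (0:ℝ) ^ 2 + 40226554368000 * (0:ℝ) ^ 4 + (-42908324659200) * (0:ℝ) ^ 6 + 21454162329600 * (0:ℝ) ^ 8 + (-5721109954560) * (0:ℝ) ^ 10 + 866834841600 * (0:ℝ) ^ 12 + (-76205260800) * (0:ℝ) ^ 14 + 3810263040 * (0:ℝ) ^ 16 + (-99614720) * (0:ℝ) ^ 18 + 1048576 * (0:ℝ) ^ 20)) = (((1328453159313751 : ℝ)/976562500000000)) := by norm_num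
  refine ⟨?_, ?_, ?_⟩
  · intro t
    by_cases h : t ∈ Set.Icc (0 : ℝ) (4 * T)
    · simp only [hg]
      rw [if_pos h, hW (2 * Real.sqrt Real.pi * (t - 4 * T / 2) / T), hW 0, hB]
      have hy : (2 * Real.sqrt Real.pi * (t - 4 * T / 2) / T) ^ 2 = 4 * Real.pi * ((t - 4 * T / 2) / T) ^ 2 := by
        rw [div_pow, mul_pow, mul_pow, Real.sq_sqrt Real.pi_pos.le]
        ring
      have hEE : Real.exp (-2 * Real.pi * ((t - 4 * T / 2) / T) ^ 2) ^ 2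
          = Real.exp (-((2 * Real.sqrt Real.pi * (t - 4 * T / 2) / T) ^ 2)) := by
        rw [pow_two, ← Real.exp_add, hy]
        congr 1
        ring
      exact branchBound T hT _ _ hEE
    · simp only [hg]
      rw [if_neg h, hW 0, hB]
      norm_num
  · simp only [hg]
    have hmem : (4 * T / 2 : ℝ) ∈ Set.Icc (0 : ℝ) (4 * T) :=
      Set.mem_Icc.mpr ⟨by nlinarith, by nlinarith⟩
    have harg : 2 * Real.sqrt Real.pi * (4 * T / 2 - 4 * T / 2) / T = 0 := by
      rw [show (4 * T / 2 - 4 * T / 2 : ℝ) = 0 from by ring, mul_zero, zero_div]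
    have hexp0 : Real.exp (-2 * Real.pi * ((4 * T / 2 - 4 * T / 2) / T) ^ 2) = 1 := by
      rw [show (4 * T / 2 - 4 * T / 2 : ℝ) = 0 from by ring, zero_div]
      norm_num
    rw [if_pos hmem, harg, hexp0, hW 0, hB]
    have h1 : T * (1 / Real.sqrt T * 1 * (((1328453159313751 : ℝ)/976562500000000))) ^ 2
        = (T / Real.sqrt T ^ 2) * (((1328453159313751 : ℝ)/976562500000000)) ^ 2 := by
      ring
    rw [h1, Real.sq_sqrt hT.le, div_self hT.ne', one_mul]
  · rw [hW 0, hB]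
    norm_num
end

section
/- Let (c, d) be a Golay complementary pair of length M and let d ≥ 0 be an integer. Define the sparsified sequences c' and d' of length (d+1)M by c'_{(d+1)m} = c_m and d'_{(d+1)m} = d_m for 0 ≤ m ≤ M−1, and c'_k = d'_k = 0 at all other indices (i.e., c' = c ⊗ [1, 0^{1×d}] and d' = d ⊗ [1, 0^{1×d}]). Then (c', d') is a Golay complementary pair of length (d+1)M. -/
lemma acf_sparse_not_dvd (M : ℕ) (e : ℕ → ℂ) (D τ : ℕ) (h : ¬ (D + 1) ∣ τ) :
    acf ((D + 1) * M) (fun k => if k % (D + 1) = 0 then e (k / (D + 1)) else 0) τ = 0 := by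
  unfold acf
  apply Finset.sum_eq_zero
  intro m _
  by_cases hm : m % (D + 1) = 0
  · have hmt : ¬ (m + τ) % (D + 1) = 0 := by
      intro hmt
      apply h
      have := Nat.dvd_sub (Nat.dvd_of_mod_eq_zero hmt) (Nat.dvd_of_mod_eq_zero hm)
      simpa using this
    simp [hmt]
  · simp [hm]

lemma acf_sparse_dvd (M : ℕ) (e : ℕ → ℂ) (D t : ℕ) :
    acf ((D + 1) * M) (fun k => if k % (D + 1) = 0 then e (k / (D + 1)) else 0)
      ((D + 1) * t) = acf M e t := by
  unfold acf
  have hN : (D + 1) * M - (D + 1) * t = (D + 1) * (M - t) := by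
    rw [Nat.mul_sub]
  rw [hN]
  rw [← Finset.sum_filter_of_ne (p := fun m => m % (D + 1) = 0)
    (by
      intro m _ hne
      by_contra hm
      simp [hm] at hne)]
  have himg : (Finset.range ((D + 1) * (M - t))).filter (fun m => m % (D + 1) = 0)
      = (Finset.range (M - t)).image (fun j => (D + 1) * j) := by
    ext m
    simp only [Finset.mem_filter, Finset.mem_range, Finset.mem_image]
    constructor
    · rintro ⟨hlt, hm⟩
      refine ⟨m / (D + 1), ?_, ?_⟩
      · have := Nat.div_mul_cancel (Nat.dvd_of_mod_eq_zero hm)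
        exact Nat.lt_of_mul_lt_mul_left (a := D + 1) (by rw [Nat.mul_div_cancel' (Nat.dvd_of_mod_eq_zero hm)]; exact hlt)
      · exact Nat.mul_div_cancel' (Nat.dvd_of_mod_eq_zero hm)
    · rintro ⟨j, hj, rfl⟩
      exact ⟨Nat.mul_lt_mul_left (Nat.succ_pos D) |>.mpr hj, Nat.mul_mod_right _ _⟩
  rw [himg, Finset.sum_image (by intro a _ b _ hab; exact Nat.eq_of_mul_eq_mul_left (Nat.succ_pos D) hab)]
  apply Finset.sum_congr rfl
  intro j _
  have h1 : (D + 1) * j + (D + 1) * t = (D + 1) * (j + t) := by ring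
  simp [h1, Nat.mul_mod_right, Nat.mul_div_cancel_left _ (Nat.succ_pos D)]

/-- Sparsification of a Golay complementary pair: if `(c, d)` is a GCP of
length `M` and `D ≥ 0`, then the sequences `c ⊗ [1, 0^{1×D}]` and
`d ⊗ [1, 0^{1×D}]` — which take the values `c_m`, `d_m` at the indices
`(D+1)m` (`0 ≤ m ≤ M−1`) and `0` elsewhere — form a GCP of length `(D+1)M`. -/
theorem GCP_sparsification (M : ℕ) (c d : ℕ → ℂ) (h : IsGCP M c d) (D : ℕ) :
    IsGCP ((D + 1) * M)
      (fun k => if k % (D + 1) = 0 then c (k / (D + 1)) else 0)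
      (fun k => if k % (D + 1) = 0 then d (k / (D + 1)) else 0) := by
  intro τ hτ1 hτ2
  by_cases hdvd : (D + 1) ∣ τ
  · obtain ⟨t, rfl⟩ := hdvd
    rw [acf_sparse_dvd, acf_sparse_dvd]
    have hlt : (D + 1) * t < (D + 1) * M := by
      have := hτ1; omega
    have htM : t < M := Nat.lt_of_mul_lt_mul_left hlt
    apply h
    · rcases Nat.eq_zero_or_pos t with h0 | hpos
      · subst h0; simp at hτ1
      · exact hpos
    · omega
  · rw [acf_sparse_not_dvd _ _ _ _ hdvd, acf_sparse_not_dvd _ _ _ _ hdvd, add_zero]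
end
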